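/- arXiv:1501.07348 — 6 statements merged into one kernel-verified Lean document; each statement's English description precedes it below -/
import Mathlib

section
/- Let G be a finite simple graph and let k be an integer with 2 ≤ k ≤ |V(G)| such that G has at least one (k−1)-subgraph with an edge (so σ*_{k−1}(G) is defined and positive in the relevant regime). Then σ*_k(G) < σ*_{k−1}(G) + 2, i.e., the maximum density of a k-vertex subgraph of G is strictly less than the maximum density of a (k−1)-vertex subgraph of G plus 2. -/
open Finset

variable {V : Type*}

noncomputable def graphDensity [Fintype V] (G : SimpleGraph V) : ℝ :=
  2 * G.edgeSet.ncard / Fintype.card V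

noncomputable def setDensity (G : SimpleGraph V) (A : Set V) : ℝ :=
  2 * (G.induce A).edgeSet.ncard / A.ncard

noncomputable def indDensity (G : SimpleGraph V) (S : Finset V) : ℝ :=
  2 * (G.induce (S : Set V)).edgeSet.ncard / S.card

noncomputable def subDensity {G : SimpleGraph V} (H : G.Subgraph) : ℝ :=
  2 * H.edgeSet.ncard / H.verts.ncard

noncomputable def maxKDensity (G : SimpleGraph V) (k : ℕ) : ℝ :=
  sSup {x : ℝ | ∃ H : G.Subgraph, H.verts.ncard = k ∧ x = subDensity H}

noncomputable def maxConnKDensity (G : SimpleGraph V) (k : ℕ) : ℝ :=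
  sSup {x : ℝ | ∃ H : G.Subgraph, H.verts.ncard = k ∧ H.Connected ∧ x = subDensity H}

noncomputable def maxDensity (G : SimpleGraph V) : ℝ :=
  sSup {x : ℝ | ∃ H : G.Subgraph, H.verts.Nonempty ∧ x = subDensity H}

def cutCount (G : SimpleGraph V) [DecidableRel G.Adj] (S T : Finset V) : ℕ :=
  ((S ×ˢ T).filter fun p => G.Adj p.1 p.2).card

def IsCompOf (G : SimpleGraph V) (A W : Set V) : Prop :=
  A.Nonempty ∧ A ⊆ W ∧ (G.induce A).Connected ∧
    ∀ B : Set V, A ⊆ B → B ⊆ W → (G.induce B).Connected → B = A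

noncomputable def subWDensity {G : SimpleGraph V} (w : Sym2 V → ℝ) (H : G.Subgraph) : ℝ :=
  2 * (∑ᶠ e ∈ H.edgeSet, w e) / H.verts.ncard

noncomputable def indWDensity (G : SimpleGraph V) (w : Sym2 V → ℝ) (S : Finset V) : ℝ :=
  2 * (∑ᶠ e ∈ {e : Sym2 V | e ∈ G.edgeSet ∧ ∀ v ∈ e, v ∈ S}, w e) / S.card

noncomputable def maxKWDensity (G : SimpleGraph V) (w : Sym2 V → ℝ) (k : ℕ) : ℝ :=
  sSup {x : ℝ | ∃ H : G.Subgraph, H.verts.ncard = k ∧ x = subWDensity w H}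

noncomputable def maxConnKWDensity (G : SimpleGraph V) (w : Sym2 V → ℝ) (k : ℕ) : ℝ :=
  sSup {x : ℝ | ∃ H : G.Subgraph, H.verts.ncard = k ∧ H.Connected ∧ x = subWDensity w H}


private lemma stmt0_fin_subgraph [Finite V] (G : SimpleGraph V) : Finite G.Subgraph :=
  Finite.of_injective (fun H => (H.verts, H.Adj)) (by
    intro a b h
    exact SimpleGraph.Subgraph.ext (congrArg Prod.fst h) (congrArg Prod.snd h))

private lemma stmt0_finite_Sk [Fintype V] (G : SimpleGraph V) (k : ℕ) :
    {x : ℝ | ∃ H : G.Subgraph, H.verts.ncard = k ∧ x = subDensity H}.Finite := by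
  haveI := stmt0_fin_subgraph G
  have : {x : ℝ | ∃ H : G.Subgraph, H.verts.ncard = k ∧ x = subDensity H}
      ⊆ Set.range (subDensity : G.Subgraph → ℝ) := by
    rintro x ⟨H, -, rfl⟩; exact ⟨H, rfl⟩
  exact (Set.finite_range _).subset this

private lemma stmt0_key [Fintype V] (G : SimpleGraph V) (k : ℕ) (hk2 : 2 ≤ k) (H : G.Subgraph)
    (hH : H.verts.ncard = k) : subDensity H < maxKDensity G (k - 1) + 2 := by
  classical
  set K := H.spanningCoe with hK
  have hKadj : ∀ a b, K.Adj a b ↔ H.Adj a b := fun a b => Iff.rfl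
  have hWfin : H.verts.Finite := Set.toFinite _
  set W : Finset V := H.verts.toFinset with hW
  have hWcard : W.card = k := by
    show H.verts.toFinset.card = k
    rw [← Set.ncard_eq_toFinset_card']; exact hH
  have hEeq : H.edgeSet = K.edgeSet := rfl
  set e : ℕ := K.edgeFinset.card with he
  have hEcard : H.edgeSet.ncard = e := by
    rw [hEeq, he, Set.ncard_eq_toFinset_card']
    congr 1
  -- handshake restricted to W
  have hdeg0 : ∀ v ∉ W, K.degree v = 0 := by
    intro v hv
    rw [← SimpleGraph.card_neighborFinset_eq_degree, Finset.card_eq_zero,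
      Finset.eq_empty_iff_forall_notMem]
    intro w hw
    rw [SimpleGraph.mem_neighborFinset, hKadj] at hw
    exact hv (by rw [hW, Set.mem_toFinset]; exact hw.fst_mem)
  have hsum : ∑ v ∈ W, K.degree v = 2 * e := by
    rw [← SimpleGraph.sum_degrees_eq_twice_card_edges]
    exact Finset.sum_subset (Finset.subset_univ W) (fun v _ hv => hdeg0 v hv)
  have hWne : W.Nonempty := by rw [← Finset.card_pos, hWcard]; omega
  obtain ⟨v, hvW, hvmin⟩ := Finset.exists_min_image W (fun v => K.degree v) hWne
  set d : ℕ := K.degree v with hd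
  have hkd : k * d ≤ 2 * e := by
    calc k * d = W.card * d := by rw [hWcard]
    _ ≤ ∑ u ∈ W, K.degree u := by
        rw [← smul_eq_mul]; exact Finset.card_nsmul_le_sum W _ d hvmin
    _ = 2 * e := hsum
  have hdk : d ≤ k - 1 := by
    have hsub : K.neighborFinset v ⊆ W.erase v := by
      intro w hw
      rw [SimpleGraph.mem_neighborFinset] at hw
      refine Finset.mem_erase.2 ⟨hw.ne', by rw [hW, Set.mem_toFinset]; exact hw.snd_mem⟩
    calc d = (K.neighborFinset v).card := (SimpleGraph.card_neighborFinset_eq_degree K v).symm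
    _ ≤ (W.erase v).card := Finset.card_le_card hsub
    _ = k - 1 := by rw [Finset.card_erase_of_mem hvW, hWcard]
  -- the deleted subgraph
  set H' : G.Subgraph := H.deleteVerts {v} with hH'
  have hIsub : K.incidenceFinset v ⊆ K.edgeFinset := by
    intro x hx
    rw [SimpleGraph.mem_incidenceFinset] at hx
    rw [SimpleGraph.mem_edgeFinset]; exact hx.1
  have hH'E : H'.edgeSet = ↑(K.edgeFinset \ K.incidenceFinset v) := by
    ext x
    induction x with
    | _ a b =>
      simp only [hH', SimpleGraph.Subgraph.mem_edgeSet, SimpleGraph.Subgraph.deleteVerts_adj,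
        Finset.coe_sdiff, Set.mem_diff, Finset.mem_coe, SimpleGraph.mem_edgeFinset,
        SimpleGraph.mem_incidenceFinset, SimpleGraph.mem_edgeSet, Set.mem_singleton_iff,
        Sym2.mem_iff]
      constructor
      · rintro ⟨-, ha, -, hb, hab⟩
        refine ⟨hab, ?_⟩
        simp only [SimpleGraph.incidenceSet, Set.mem_sep_iff, Sym2.mem_iff]
        rintro ⟨-, rfl | rfl⟩ <;> simp_all
      · rintro ⟨hab, hni⟩
        simp only [SimpleGraph.incidenceSet, Set.mem_sep_iff, Sym2.mem_iff] at hni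
        have hab' : H.Adj a b := hab
        refine ⟨hab'.fst_mem, ?_, hab'.snd_mem, ?_, hab'⟩ <;>
          · rintro rfl
            exact hni ⟨hab, by simp⟩
  have hH'Ecard : H'.edgeSet.ncard = e - d := by
    rw [hH'E, Set.ncard_coe_finset, Finset.card_sdiff_of_subset hIsub,
      SimpleGraph.card_incidenceFinset_eq_degree]
  have hH'V : H'.verts.ncard = k - 1 := by
    rw [hH', SimpleGraph.Subgraph.deleteVerts_verts, Set.ncard_diff_singleton_of_mem
      (by rw [hW, Set.mem_toFinset] at hvW; exact hvW), hH]
  have hde : d ≤ e := by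
    calc d = (K.incidenceFinset v).card := (SimpleGraph.card_incidenceFinset_eq_degree K v).symm
    _ ≤ e := Finset.card_le_card hIsub
  -- H' witnesses the (k-1)-density
  have hmem : subDensity H' ∈
      {x : ℝ | ∃ H : G.Subgraph, H.verts.ncard = k - 1 ∧ x = subDensity H} :=
    ⟨H', hH'V, rfl⟩
  have hle : subDensity H' ≤ maxKDensity G (k - 1) :=
    le_csSup (stmt0_finite_Sk G (k - 1)).bddAbove hmem
  have hmain : subDensity H < subDensity H' + 2 := by
    have hkey : k * d < e + k * (k - 1) := by
      rcases Nat.eq_zero_or_pos e with h0 | h0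
      · have hd0 : d = 0 := by omega
        have hpos : 0 < k * (k - 1) := Nat.mul_pos (by omega) (by omega)
        omega
      · have : k * d ≤ k * (k - 1) := Nat.mul_le_mul_left k hdk
        omega
    simp only [subDensity]
    rw [hEcard, hH'Ecard, hH, hH'V]
    have hk0 : (0:ℝ) < k := by positivity
    have hk1 : (0:ℝ) < ((k:ℝ) - 1) := by
      have : (2:ℝ) ≤ k := by exact_mod_cast hk2
      linarith
    have hcast : ((k - 1 : ℕ) : ℝ) = (k:ℝ) - 1 := by
      have : 1 ≤ k := by omega
      push_cast [Nat.cast_sub this]; ring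
    have hcast2 : ((e - d : ℕ) : ℝ) = (e:ℝ) - d := by
      push_cast [Nat.cast_sub hde]; ring
    rw [hcast, hcast2]
    rw [div_add' _ _ _ (ne_of_gt hk1), div_lt_div_iff₀ hk0 hk1]
    have h1 : (k:ℝ) * d < (e:ℝ) + k * ((k:ℝ) - 1) := by
      have h2 : ((k * d : ℕ) : ℝ) < ((e + k * (k-1) : ℕ) : ℝ) := by exact_mod_cast hkey
      push_cast [Nat.cast_sub (by omega : 1 ≤ k)] at h2
      linarith
    nlinarith [h1, hk0, hk1]
  linarith

/-- `σ*_k(G) < σ*_{k-1}(G) + 2`. -/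
theorem stmt0 [Fintype V] (G : SimpleGraph V) (k : ℕ) (hk2 : 2 ≤ k)
    (hkn : k ≤ Fintype.card V)
    (hE : ∃ H : G.Subgraph, H.verts.ncard = k - 1 ∧ H.edgeSet.Nonempty) :
    maxKDensity G k < maxKDensity G (k - 1) + 2 := by
  classical
  obtain ⟨S, -, hScard⟩ := Finset.exists_subset_card_eq (by rw [Finset.card_univ]; exact hkn :
    k ≤ (Finset.univ : Finset V).card)
  let H0 : G.Subgraph :=
    ⟨↑S, fun _ _ => False, fun h => h.elim, fun h => h.elim, ⟨fun _ _ h => h⟩⟩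
  have hH0 : H0.verts.ncard = k := by
    show (↑S : Set V).ncard = k
    rw [Set.ncard_coe_finset, hScard]
  have hne : {x : ℝ | ∃ H : G.Subgraph, H.verts.ncard = k ∧ x = subDensity H}.Nonempty :=
    ⟨subDensity H0, H0, hH0, rfl⟩
  obtain ⟨H₀, hH₀, hval⟩ := hne.csSup_mem (stmt0_finite_Sk G k)
  rw [maxKDensity, hval]
  exact stmt0_key G k hk2 H₀ hH₀
end

section
/- Let G be a finite simple graph, let k ≥ 3 be an integer, let G₁ be a connected subgraph of G on exactly k vertices, and let G₂ be a nonempty connected subgraph of G₁. Then σ(G₁) ≥ σ(G₂)/√k. -/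
open Finset

variable {V : Type*}

lemma conn_card_le_aux {V : Type*} [Fintype V] [DecidableEq V] (G : SimpleGraph V)
    [Fintype G.edgeSet] (hG : G.Connected) :
    Fintype.card V ≤ G.edgeFinset.card + 1 := by
  have hne := hG.nonempty
  inhabit V
  have hcard : (({default} : Finset V)ᶜ).card + 1 = Fintype.card V := by
    rw [Finset.card_compl, Finset.card_singleton, Nat.sub_add_cancel Fintype.card_pos]
  rw [← hcard, add_le_add_iff_right]
  choose p hp using fun w => hG.exists_walk_length_eq_dist w default
  have key : ∀ w : V, w ≠ default → G.dist ((p w).getVert 1) default < G.dist w default := by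
    intro w hw
    have hnil : ¬ (p w).Nil := SimpleGraph.Walk.not_nil_of_ne hw
    have h1 : (p w).tail.length + 1 = (p w).length :=
      SimpleGraph.Walk.length_tail_add_one hnil
    have h2 : G.dist ((p w).getVert 1) default ≤ (p w).tail.length :=
      SimpleGraph.dist_le _
    have h3 := hp w
    omega
  apply Finset.card_le_card_of_injOn (fun w => s(w, (p w).getVert 1))
  · intro w hw
    rw [Finset.mem_coe, Finset.mem_compl, Finset.mem_singleton] at hw
    rw [Finset.mem_coe, SimpleGraph.mem_edgeFinset, SimpleGraph.mem_edgeSet]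
    exact SimpleGraph.Walk.adj_snd (p := p w) (SimpleGraph.Walk.not_nil_of_ne hw)
  · intro a ha b hb hab
    rw [Finset.mem_coe, Finset.mem_compl, Finset.mem_singleton] at ha hb
    rcases Sym2.eq_iff.mp hab with ⟨h, _⟩ | ⟨h1, h2⟩
    · exact h
    · exfalso
      have ka := key a ha
      have kb := key b hb
      rw [h2] at ka
      rw [← h1] at kb
      omega

lemma subgraph_edge_ncard' {V : Type*} {G : SimpleGraph V} (H : G.Subgraph) :
    H.edgeSet.ncard = H.coe.edgeSet.ncard := by
  rw [← SimpleGraph.Subgraph.image_coe_edgeSet_coe,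
    Set.ncard_image_of_injective _ (Sym2.map.injective Subtype.val_injective)]

lemma verts_ncard_eq {V : Type*} {G : SimpleGraph V} (H : G.Subgraph) [Fintype H.verts] :
    H.verts.ncard = Fintype.card H.verts := by
  rw [← Nat.card_coe_set_eq, Nat.card_eq_fintype_card]

/-- connected subgraph has at least (verts - 1) edges -/
lemma subgraph_conn_edges {V : Type*} [Fintype V] {G : SimpleGraph V} (H : G.Subgraph)
    (hc : H.Connected) : H.verts.ncard ≤ H.edgeSet.ncard + 1 := by
  classical
  haveI : Fintype H.verts := H.verts.toFinite.fintype
  haveI : Fintype H.coe.edgeSet := H.coe.edgeSet.toFinite.fintype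
  have h := conn_card_le_aux H.coe hc.coe
  rw [SimpleGraph.edgeFinset_card] at h
  rw [verts_ncard_eq, subgraph_edge_ncard', ← Nat.card_coe_set_eq,
    Nat.card_eq_fintype_card]
  exact h

/-- edge count bound -/
lemma subgraph_edges_le {V : Type*} [Fintype V] {G : SimpleGraph V} (H : G.Subgraph) :
    2 * H.edgeSet.ncard ≤ H.verts.ncard * (H.verts.ncard - 1) := by
  classical
  haveI : Fintype H.verts := H.verts.toFinite.fintype
  haveI : Fintype H.coe.edgeSet := H.coe.edgeSet.toFinite.fintype
  have h := SimpleGraph.card_edgeFinset_le_card_choose_two (G := H.coe)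
  rw [SimpleGraph.edgeFinset_card] at h
  rw [subgraph_edge_ncard', ← Nat.card_coe_set_eq, Nat.card_eq_fintype_card,
    verts_ncard_eq]
  rw [Nat.choose_two_right] at h
  omega


/-- a connected `k`-subgraph is at least `1/√k` as dense as any
nonempty connected subgraph of it. -/
theorem stmt3 [Fintype V] (G : SimpleGraph V) (k : ℕ) (hk : 3 ≤ k)
    (H1 H2 : G.Subgraph) (h1k : H1.verts.ncard = k) (h1c : H1.Connected)
    (h21 : H2 ≤ H1) (h2ne : H2.verts.Nonempty) (h2c : H2.Connected) :
    subDensity H1 ≥ subDensity H2 / Real.sqrt k := by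
  classical
  have hm1 : 1 ≤ H2.verts.ncard := (Set.ncard_pos H2.verts.toFinite).mpr h2ne
  have hee : H2.edgeSet.ncard ≤ H1.edgeSet.ncard :=
    Set.ncard_le_ncard (SimpleGraph.Subgraph.edgeSet_mono h21) H1.edgeSet.toFinite
  have hke : k ≤ H1.edgeSet.ncard + 1 := h1k ▸ subgraph_conn_edges H1 h1c
  have h2b : 2 * H2.edgeSet.ncard ≤ H2.verts.ncard * H2.verts.ncard :=
    le_trans (subgraph_edges_le H2)
      (Nat.mul_le_mul_left _ (Nat.sub_le _ 1))
  have hk0 : (0:ℝ) < k := by positivity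
  have hs0 : (0:ℝ) < Real.sqrt k := Real.sqrt_pos.mpr hk0
  have hss : Real.sqrt k * Real.sqrt k = (k:ℝ) := Real.mul_self_sqrt hk0.le
  have hm0 : (0:ℝ) < H2.verts.ncard := by exact_mod_cast hm1
  unfold subDensity
  rw [h1k, ge_iff_le, div_div, div_le_div_iff₀ (by positivity) hk0]
  set s := Real.sqrt k with hsdef
  set M := (H2.verts.ncard : ℝ) with hMdef
  set E1 := (H1.edgeSet.ncard : ℝ) with hE1def
  set E2 := (H2.edgeSet.ncard : ℝ) with hE2def
  have hE : E2 ≤ E1 := by rw [hE1def, hE2def]; exact_mod_cast hee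
  have hE2b : 2 * E2 ≤ M * M := by rw [hE2def, hMdef]; exact_mod_cast h2b
  have hkE : (k:ℝ) ≤ E1 + 1 := by rw [hE1def]; exact_mod_cast hke
  have hE1nn : (0:ℝ) ≤ E1 := by positivity
  have hE2nn : (0:ℝ) ≤ E2 := by positivity
  rcases le_or_gt (k:ℝ) (M * M) with hcase | hcase
  · have hsM : s ≤ M := by
      have := Real.sqrt_le_sqrt hcase
      rwa [show M * M = M ^ 2 by ring, Real.sqrt_sq hm0.le] at this
    have key : E2 * s ≤ E1 * M := mul_le_mul hE hsM hs0.le hE1nn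
    nlinarith [mul_le_mul_of_nonneg_right key hs0.le]
  · have hMs : M ≤ s := by
      have := Real.sqrt_le_sqrt hcase.le
      rwa [show M * M = M ^ 2 by ring, Real.sqrt_sq hm0.le] at this
    have hk3 : (3:ℝ) ≤ (k:ℝ) := by exact_mod_cast hk
    have h1 : 2 * E2 * k ≤ M * M * k :=
      mul_le_mul_of_nonneg_right hE2b hk0.le
    have h2 : M * M * k ≤ M * s * k :=
      mul_le_mul_of_nonneg_right (mul_le_mul_of_nonneg_left hMs hm0.le) hk0.le
    have hms0 : (0:ℝ) ≤ M * s := by positivity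
    have h5 : M * s * k ≤ M * s * (2 * (k - 1)) :=
      mul_le_mul_of_nonneg_left (by linarith) hms0
    have h6 : M * s * (2 * (k - 1)) ≤ M * s * (2 * E1) :=
      mul_le_mul_of_nonneg_left (by linarith) hms0
    nlinarith [h1, h2, h5, h6]
end

section
/- Let G be a connected finite simple graph on n vertices, let S be a nonempty proper subset of V(G) such that the induced subgraph G[S] is connected, and let j be an integer with 1 ≤ j ≤ n − |S|. Then there exists a set S* ⊆ V(G)∖S with |S*| = j such that the induced subgraph G[S ∪ S*] is connected and the number of edges of G with one end in S and the other end in S* is at least (j/n) times the number of edges of G with one end in S and the other end in V(G)∖S. -/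
open Finset

variable {V : Type*}

lemma cut_insert [DecidableEq V] (G : SimpleGraph V) [DecidableRel G.Adj]
    (S T : Finset V) (v : V) (hv : v ∉ T) :
    cutCount G S (insert v T) = cutCount G S T + (S.filter (fun u => G.Adj u v)).card := by
  classical
  unfold cutCount
  rw [Finset.insert_eq, Finset.product_union, Finset.filter_union,
    Finset.card_union_of_disjoint, Finset.product_singleton, Finset.filter_map,
    Finset.card_map]
  · simp only [Function.Embedding.coeFn_mk, Function.comp_def]
    omega
  · refine Finset.disjoint_filter_filter ?_
    simp only [Finset.disjoint_left, Finset.mem_product, Finset.mem_singleton]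
    rintro ⟨a, b⟩ ⟨_, rfl⟩ ⟨_, hb⟩
    exact hv hb

lemma cut_sum [DecidableEq V] (G : SimpleGraph V) [DecidableRel G.Adj] (S T : Finset V) :
    cutCount G S T = ∑ v ∈ T, (S.filter (fun u => G.Adj u v)).card := by
  classical
  induction T using Finset.induction with
  | empty => simp [cutCount]
  | insert _ _ hv ih => rw [cut_insert _ _ _ _ hv, Finset.sum_insert hv, ih]; ring

lemma connected_insert (G : SimpleGraph V) {W : Set V} (hW : (G.induce W).Connected)
    {u v : V} (hu : u ∈ W) (h : G.Adj u v) : (G.induce (insert v W)).Connected := by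
  have he : insert v W = W ∪ {u, v} := by
    ext x
    simp only [Set.mem_insert_iff, Set.mem_union, Set.mem_insert_iff, Set.mem_singleton_iff]
    constructor
    · rintro (rfl | hx) <;> tauto
    · rintro (hx | rfl | rfl) <;> tauto
  rw [he]
  exact SimpleGraph.induce_union_connected hW.preconnected (SimpleGraph.induce_pair_connected_of_adj h).preconnected
    ⟨u, hu, by simp⟩

lemma exists_adj_outside (G : SimpleGraph V) (hG : G.Connected)
    {W : Set V} (hne : W.Nonempty) (hx : ∃ x, x ∉ W) :
    ∃ u v, u ∈ W ∧ v ∉ W ∧ G.Adj u v := by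
  obtain ⟨w, hw⟩ := hne
  obtain ⟨x, hxW⟩ := hx
  obtain ⟨p⟩ := hG.preconnected w x
  obtain ⟨d, _, h1, h2⟩ := p.exists_boundary_dart W hw hxW
  exact ⟨d.fst, d.snd, h1, h2, d.adj⟩

lemma key [Fintype V] [DecidableEq V] (G : SimpleGraph V) [DecidableRel G.Adj]
    (hG : G.Connected) (S : Finset V) (hSne : S.Nonempty)
    (hScon : (G.induce (S : Set V)).Connected) :
    ∀ i : ℕ, i ≤ Sᶜ.card → ∃ T : Finset V, T ⊆ Sᶜ ∧ T.card = i ∧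
      (G.induce ((S ∪ T : Finset V) : Set V)).Connected ∧
      i * cutCount G S Sᶜ ≤ Sᶜ.card * cutCount G S T := by
  intro i
  induction i with
  | zero =>
    intro _
    refine ⟨∅, by simp, by simp, ?_, by simp⟩
    have : (S ∪ (∅ : Finset V)) = S := Finset.union_empty S
    rw [this]
    exact hScon
  | succ i ih =>
    intro hi
    obtain ⟨T, hTsub, hTcard, hTconn, hTcut⟩ := ih (Nat.le_of_succ_le hi)
    set d : V → ℕ := fun v => (S.filter (fun u => G.Adj u v)).card with hd
    set R : Finset V := Sᶜ \ T with hR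
    have hRcard : R.card = Sᶜ.card - i := by
      rw [hR, Finset.card_sdiff_of_subset hTsub, hTcard]
    have hRpos : 0 < R.card := by omega
    have hRne : R.Nonempty := Finset.card_pos.mp hRpos
    have hsum : cutCount G S Sᶜ = cutCount G S T + ∑ v ∈ R, d v := by
      rw [cut_sum G S Sᶜ, cut_sum G S T, ← Finset.sum_sdiff hTsub, ← hR]
      ring
    -- find a good vertex v ∈ R adjacent to S ∪ T with a large degree to S
    have hvx : ∃ v ∈ R, (∃ u ∈ (S ∪ T), G.Adj u v) ∧
        cutCount G S Sᶜ ≤ cutCount G S T + R.card * d v := by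
      obtain ⟨v₀, hv₀R, hmax⟩ := Finset.exists_max_image R d hRne
      by_cases hpos : 0 < d v₀
      · refine ⟨v₀, hv₀R, ?_, ?_⟩
        · obtain ⟨u, hu⟩ := Finset.card_pos.mp hpos
          simp only [Finset.mem_filter] at hu
          exact ⟨u, Finset.mem_union_left _ hu.1, hu.2⟩
        · have : ∑ v ∈ R, d v ≤ R.card * d v₀ := by
            calc ∑ v ∈ R, d v ≤ ∑ _v ∈ R, d v₀ := Finset.sum_le_sum (fun x hx => hmax x hx)
            _ = R.card * d v₀ := by rw [Finset.sum_const, smul_eq_mul]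
          omega
      · -- all degrees in R are zero
        have hzero : ∑ v ∈ R, d v = 0 := by
          refine Finset.sum_eq_zero fun x hx => ?_
          have := hmax x hx
          omega
        have hout : ∃ x, x ∉ ((S ∪ T : Finset V) : Set V) := by
          obtain ⟨x, hxR⟩ := hRne
          simp only [hR, Finset.mem_sdiff, Finset.mem_compl] at hxR
          exact ⟨x, by simp [hxR.1, hxR.2]⟩
        obtain ⟨u, v, hu, hv, huv⟩ := exists_adj_outside G hG
          (W := ((S ∪ T : Finset V) : Set V)) ⟨hSne.choose, by simp [hSne.choose_spec]⟩ hout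
        have hvR : v ∈ R := by
          simp only [Finset.coe_union, Set.mem_union, Finset.mem_coe] at hv
          push_neg at hv
          simp [hR, Finset.mem_sdiff, hv.1, hv.2]
        exact ⟨v, hvR, ⟨u, by simpa using hu, huv⟩, by omega⟩
    obtain ⟨v, hvR, ⟨u, huST, huv⟩, hcut⟩ := hvx
    have hvT : v ∉ T := by simp only [hR, Finset.mem_sdiff] at hvR; exact hvR.2
    have hvSc : v ∈ Sᶜ := by simp only [hR, Finset.mem_sdiff] at hvR; exact hvR.1
    refine ⟨insert v T, Finset.insert_subset hvSc hTsub, by rw [Finset.card_insert_of_notMem hvT, hTcard], ?_, ?_⟩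
    · have : ((S ∪ insert v T : Finset V) : Set V) = insert v ((S ∪ T : Finset V) : Set V) := by
        rw [Finset.union_insert]; simp
      rw [this]
      exact connected_insert G hTconn (by simpa using huST) huv
    · rw [cut_insert G S T v hvT]
      -- arithmetic
      have hmi : i < Sᶜ.card := hi
      set m := Sᶜ.card
      set c := cutCount G S T
      set C := cutCount G S Sᶜ
      set dv := d v
      have h2 : C ≤ c + (m - i) * dv := by rw [← hRcard]; exact hcut
      zify [Nat.le_of_lt hmi] at hTcut h2 ⊢
      nlinarith [hTcut, h2, mul_nonneg (by omega : (0:ℤ) ≤ (m:ℤ) - i - 1) (by linarith [hTcut] : (0:ℤ) ≤ (m:ℤ) * c - i * C)]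

/-- greedy attachment — there is a `j`-attachment `S*` of `S` keeping
`G[S ∪ S*]` connected and capturing a `j/n` fraction of the edges leaving `S`. -/
theorem stmt5 [Fintype V] [DecidableEq V] (G : SimpleGraph V) [DecidableRel G.Adj]
    (hG : G.Connected) (S : Finset V) (hSne : S.Nonempty) (hSp : S ≠ Finset.univ)
    (hScon : (G.induce (S : Set V)).Connected) (j : ℕ) (hj1 : 1 ≤ j)
    (hjn : j ≤ Fintype.card V - S.card) :
    ∃ T : Finset V, T ⊆ Sᶜ ∧ T.card = j ∧
      (G.induce ((S ∪ T : Finset V) : Set V)).Connected ∧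
      (cutCount G S T : ℝ) ≥ ((j : ℝ) / (Fintype.card V : ℝ)) * (cutCount G S Sᶜ : ℝ) := by
  have hjm : j ≤ Sᶜ.card := by rw [Finset.card_compl]; exact hjn
  obtain ⟨T, h1, h2, h3, h4⟩ := key G hG S hSne hScon j hjm
  refine ⟨T, h1, h2, h3, ?_⟩
  have hn : 0 < Fintype.card V := Fintype.card_pos_iff.mpr ⟨hSne.choose⟩
  have hm : Sᶜ.card ≤ Fintype.card V := Finset.card_le_univ _
  have hkey : j * cutCount G S Sᶜ ≤ Fintype.card V * cutCount G S T :=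
    h4.trans (Nat.mul_le_mul_right _ hm)
  rw [ge_iff_le, div_mul_eq_mul_div, div_le_iff₀ (by exact_mod_cast hn)]
  have := (Nat.cast_le (α := ℝ)).mpr hkey
  push_cast at this ⊢
  linarith
end

section
/- Let k ≥ 2 be an even integer and let G' be a connected finite simple graph on N > k vertices in which every vertex v satisfies d_{G'}(v) ≥ σ(G')/2 (equivalently, G' has no removable vertices). Then there exists a set S of exactly k vertices of G' such that the induced subgraph G'[S] is connected and σ(G'[S]) ≥ (k/(4N))·σ(G'). -/
open Finset

variable {V : Type*}

set_option linter.unusedSectionVars false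

section aux
variable [Fintype V] [DecidableEq V] (G : SimpleGraph V) [DecidableRel G.Adj]

/-- Twice the number of edges of `G` inside `S`. -/
def eD (S : Finset V) : ℕ := ∑ a ∈ S, ∑ b ∈ S, if G.Adj a b then 1 else 0

lemma eD_insert (S : Finset V) (u : V) (hu : u ∉ S) :
    eD G (insert u S) = eD G S + 2 * ∑ b ∈ S, (if G.Adj u b then 1 else 0) := by
  unfold eD
  rw [Finset.sum_insert hu, Finset.sum_insert hu]
  have h1 : ∀ a ∈ S, (∑ b ∈ insert u S, if G.Adj a b then 1 else 0)
      = (if G.Adj u a then 1 else 0) + ∑ b ∈ S, (if G.Adj a b then 1 else 0) := by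
    intro a _
    rw [Finset.sum_insert hu]
    congr 1
    simp [SimpleGraph.adj_comm]
  rw [Finset.sum_congr rfl h1, Finset.sum_add_distrib]
  simp [G.irrefl]
  ring

lemma degree_sum_split (S : Finset V) :
    ∑ v ∈ S, G.degree v
      = eD G S + ∑ u ∈ univ \ S, ∑ b ∈ S, (if G.Adj u b then 1 else 0) := by
  have hdeg : ∀ v, G.degree v = ∑ b ∈ univ, if G.Adj v b then 1 else 0 := by
    intro v
    rw [← SimpleGraph.card_neighborFinset_eq_degree, SimpleGraph.neighborFinset_eq_filter,
      Finset.card_filter]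
  calc ∑ v ∈ S, G.degree v
      = ∑ v ∈ S, ((∑ b ∈ univ \ S, if G.Adj v b then 1 else 0)
          + ∑ b ∈ S, (if G.Adj v b then 1 else 0)) := by
        refine Finset.sum_congr rfl fun v _ => ?_
        rw [hdeg v, Finset.sum_sdiff (Finset.subset_univ S)]
    _ = eD G S + ∑ v ∈ S, ∑ b ∈ univ \ S, (if G.Adj v b then 1 else 0) := by
        rw [Finset.sum_add_distrib]; unfold eD; ring
    _ = _ := by
        congr 1
        rw [Finset.sum_comm]
        refine Finset.sum_congr rfl fun u _ => Finset.sum_congr rfl fun b _ => ?_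
        simp [SimpleGraph.adj_comm]

lemma handshake (S : Finset V) :
    2 * (G.induce (S : Set V)).edgeSet.ncard = eD G S := by
  haveI : DecidableRel (G.induce (S : Set V)).Adj :=
    fun a b => inferInstanceAs (Decidable (G.Adj a.1 b.1))
  rw [Set.ncard_eq_toFinset_card']
  have hs := SimpleGraph.sum_degrees_eq_twice_card_edges (G.induce (S : Set V))
  rw [SimpleGraph.edgeFinset] at hs
  rw [← hs]
  have hdeg : ∀ v : (S : Set V), (G.induce (S : Set V)).degree v
      = ∑ b ∈ S, if G.Adj v.1 b then 1 else 0 := by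
    intro v
    rw [← SimpleGraph.card_neighborFinset_eq_degree, SimpleGraph.neighborFinset_eq_filter,
      Finset.card_filter]
    rw [← Finset.sum_finset_coe (fun b => if G.Adj v.1 b then (1:ℕ) else 0) S]
    simp [SimpleGraph.comap_adj, Function.Embedding.coe_subtype]
  rw [Finset.sum_congr rfl (fun v _ => hdeg v)]
  unfold eD
  rw [← Finset.sum_finset_coe (fun a => ∑ b ∈ S, if G.Adj a b then (1:ℕ) else 0) S]

lemma exists_cross_edge (hG : G.Connected) (S : Finset V) (hS : S.Nonempty)
    (hS2 : S ≠ univ) : ∃ u ∉ S, ∃ v ∈ S, G.Adj u v := by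
  obtain ⟨y, hy⟩ := hS
  have : ∃ x, x ∉ S := by
    by_contra h
    push_neg at h
    exact hS2 (Finset.eq_univ_iff_forall.2 h)
  obtain ⟨x, hx⟩ := this
  obtain ⟨w⟩ := hG.preconnected y x
  clear hS2
  induction w with
  | nil => exact absurd hy hx
  | @cons a b c hab p ih =>
    by_cases hb : b ∈ S
    · exact ih hb hx
    · exact ⟨b, hb, a, hy, hab.symm⟩

lemma insert_connected (S : Finset V) (hconn : (G.induce (S : Set V)).Connected)
    {u v : V} (hv : v ∈ S) (hadj : G.Adj u v) :
    (G.induce ((insert u S : Finset V) : Set V)).Connected := by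
  have h1 : ((insert u S : Finset V) : Set V) = {u, v} ∪ (S : Set V) := by
    ext x
    simp only [Finset.coe_insert, Set.mem_insert_iff, Set.mem_union, Finset.mem_coe]
    constructor
    · rintro (rfl | h); · exact Or.inl (Or.inl rfl)
      · exact Or.inr h
    · rintro ((rfl | rfl) | h)
      · exact Or.inl rfl
      · exact Or.inr hv
      · exact Or.inr h
  rw [h1]
  exact SimpleGraph.induce_union_connected (SimpleGraph.induce_pair_connected_of_adj hadj).preconnected
    hconn.preconnected ⟨v, by simp, hv⟩

lemma singleton_connected (v : V) :
    (G.induce (({v} : Finset V) : Set V)).Connected := by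
  rw [Finset.coe_singleton, SimpleGraph.induce_singleton_eq_top]
  exact SimpleGraph.connected_top

/-- Main greedy-growth lemma. -/
lemma grow (hG : G.Connected)
    (hdeg : ∀ v : V, (G.degree v : ℝ) ≥ graphDensity G / 2)
    (k : ℕ) (hk1 : 1 ≤ k) (hkN : k < Fintype.card V) :
    ∃ S : Finset V, S.card = k ∧ (G.induce (S : Set V)).Connected ∧
      (eD G S : ℝ) * ((Fintype.card V : ℝ) * ((Fintype.card V : ℝ) - 1))
        ≥ (G.edgeSet.ncard : ℝ) * ((k : ℝ) * ((k : ℝ) - 1)) := by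
  induction k, hk1 using Nat.le_induction with
  | base =>
    have hpos : 0 < Fintype.card V := by omega
    obtain ⟨v⟩ : Nonempty V := Fintype.card_pos_iff.mp hpos
    refine ⟨{v}, Finset.card_singleton v, singleton_connected G v, ?_⟩
    have h1 : (1:ℝ) ≤ (Fintype.card V : ℝ) := by exact_mod_cast hpos
    have h2 : (0:ℝ) ≤ (eD G {v} : ℝ) := Nat.cast_nonneg _
    have h3 : (0:ℝ) ≤ (eD G {v} : ℝ) * ((Fintype.card V:ℝ) * ((Fintype.card V:ℝ)-1)) :=
      mul_nonneg h2 (mul_nonneg (by linarith) (by linarith))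
    push_cast
    linarith [h3]
  | succ i hi ih =>
    obtain ⟨S, hcard, hconn, hbound⟩ := ih (by omega)
    have hmR0 : (0:ℝ) ≤ (G.edgeSet.ncard : ℝ) := Nat.cast_nonneg _
    have hN3 : 3 ≤ Fintype.card V := by omega
    have hnR : (3 : ℝ) ≤ (Fintype.card V : ℝ) := by exact_mod_cast hN3
    have hiR : (i : ℝ) + 2 ≤ (Fintype.card V : ℝ) := by
      have h : i + 2 ≤ Fintype.card V := by omega
      calc (i:ℝ) + 2 = ((i + 2 : ℕ) : ℝ) := by push_cast; ring
        _ ≤ _ := by exact_mod_cast h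
    have hi1 : (1:ℝ) ≤ (i:ℝ) := by exact_mod_cast hi
    -- S is a proper nonempty subset
    have hSne : S.Nonempty := Finset.card_pos.mp (by omega)
    have hSnu : S ≠ univ := by
      intro h
      rw [h, Finset.card_univ] at hcard
      omega
    obtain ⟨u₁, hu₁, v₁, hv₁, hadj₁⟩ := exists_cross_edge G hG S hSne hSnu
    -- the vertex outside S with the most neighbors in S
    set c : V → ℕ := fun u => ∑ b ∈ S, (if G.Adj u b then 1 else 0) with hcdef
    have hcompl : (univ \ S).Nonempty := ⟨u₁, by simp [hu₁]⟩
    obtain ⟨u₀, hu₀mem, hu₀max⟩ := Finset.exists_max_image (univ \ S) c hcompl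
    have hu₀ : u₀ ∉ S := (Finset.mem_sdiff.mp hu₀mem).2
    have hc1 : 1 ≤ c u₀ := by
      have h1 : 1 ≤ c u₁ := by
        refine Finset.single_le_sum (f := fun b => if G.Adj u₁ b then 1 else 0)
          (fun b _ => Nat.zero_le _) hv₁ |>.trans_eq' ?_
        simp [hadj₁]
      exact h1.trans (hu₀max u₁ (by simp [hu₁]))
    -- sum of c over the complement bounded by max
    have hsum : ∑ u ∈ univ \ S, c u ≤ (Fintype.card V - i) * c u₀ := by
      have h := Finset.sum_le_card_nsmul (univ \ S) c (c u₀) (fun x hx => hu₀max x hx)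
      rwa [Finset.card_sdiff_of_subset (Finset.subset_univ S), Finset.card_univ, hcard,
        smul_eq_mul] at h
    have hsumR : ((∑ u ∈ univ \ S, c u : ℕ) : ℝ)
        ≤ ((Fintype.card V : ℝ) - (i : ℝ)) * (c u₀ : ℝ) := by
      have h1 : ((Fintype.card V - i : ℕ) : ℝ) = (Fintype.card V : ℝ) - (i : ℝ) :=
        Nat.cast_sub (by omega)
      calc ((∑ u ∈ univ \ S, c u : ℕ) : ℝ)
          ≤ (((Fintype.card V - i) * c u₀ : ℕ) : ℝ) := by exact_mod_cast hsum
        _ = _ := by rw [Nat.cast_mul, h1]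
    -- degree bound
    have hdegS : (i : ℝ) * (G.edgeSet.ncard : ℝ)
        ≤ (Fintype.card V : ℝ) * ((∑ v ∈ S, G.degree v : ℕ) : ℝ) := by
      have h1 : (i : ℝ) * (graphDensity G / 2) ≤ ((∑ v ∈ S, G.degree v : ℕ) : ℝ) := by
        push_cast
        calc (i : ℝ) * (graphDensity G / 2) = S.card • (graphDensity G / 2) := by
              rw [hcard, nsmul_eq_mul]
          _ ≤ ∑ v ∈ S, (G.degree v : ℝ) :=
              Finset.card_nsmul_le_sum S _ _ (fun v _ => hdeg v)
      have h2 : graphDensity G / 2 * (Fintype.card V : ℝ) = (G.edgeSet.ncard : ℝ) := by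
        rw [graphDensity]
        field_simp
      have h0 : (0:ℝ) ≤ ((∑ v ∈ S, G.degree v : ℕ) : ℝ) := Nat.cast_nonneg _
      nlinarith [h1, h0, hnR]
    -- the edge count split
    have hsplit : ((∑ v ∈ S, G.degree v : ℕ) : ℝ)
        = (eD G S : ℝ) + ((∑ u ∈ univ \ S, c u : ℕ) : ℝ) := by
      exact_mod_cast congrArg (fun t : ℕ => (t : ℝ)) (degree_sum_split G S)
    -- key inequality h2
    have h2 : (Fintype.card V : ℝ) * (eD G S : ℝ)
        + (Fintype.card V : ℝ) * (((Fintype.card V : ℝ) - (i:ℝ)) * (c u₀ : ℝ))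
        ≥ (i : ℝ) * (G.edgeSet.ncard : ℝ) := by
      have h3 := hdegS
      rw [hsplit] at h3
      nlinarith [hsumR, hnR]
    -- build the new set
    have hadj₀ : ∃ v ∈ S, G.Adj u₀ v := by
      by_contra h
      push_neg at h
      have : c u₀ = 0 := Finset.sum_eq_zero (fun b hb => by simp [h b hb])
      omega
    obtain ⟨v₀, hv₀, hadj₀⟩ := hadj₀
    refine ⟨insert u₀ S, ?_, insert_connected G S hconn hv₀ hadj₀, ?_⟩
    · rw [Finset.card_insert_of_notMem hu₀, hcard]
    · have hq : ((eD G (insert u₀ S) : ℕ) : ℝ) = (eD G S : ℝ) + 2 * (c u₀ : ℝ) := by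
        rw [eD_insert G S u₀ hu₀]
        simp only [hcdef]
        push_cast
        ring
      rw [hq]
      push_cast
      have hg1 : (1:ℝ) ≤ (c u₀ : ℝ) := by exact_mod_cast hc1
      -- pure arithmetic from here
      set x : ℝ := (eD G S : ℝ) with hx
      set g : ℝ := (c u₀ : ℝ) with hg
      set n : ℝ := (Fintype.card V : ℝ) with hn
      set m : ℝ := (G.edgeSet.ncard : ℝ) with hm
      set iR : ℝ := (i : ℝ) with hiRd
      have hx0 : 0 ≤ x := Nat.cast_nonneg _
      have key : (n - iR) * ((x + 2*g) * (n*(n-1))) ≥ (n - iR) * (m*((iR+1)*((iR+1)-1))) := by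
        have hA : (n - iR - 2) * (x*(n*(n-1))) ≥ (n - iR - 2) * (m*(iR*(iR-1))) :=
          mul_le_mul_of_nonneg_left hbound (by linarith)
        have hB : (n-1) * (n*x + n*((n - iR)*g)) ≥ (n-1)*(iR*m) :=
          mul_le_mul_of_nonneg_left h2 (by linarith)
        nlinarith [hA, hB]
      have hpos : (0:ℝ) < n - iR := by linarith
      have := le_of_mul_le_mul_left (by linarith [key] : (n - iR) * (m*((iR+1)*((iR+1)-1))) ≤ (n - iR) * ((x + 2*g) * (n*(n-1)))) hpos
      linarith [this]
end aux


/-- a connected graph on `N > k` vertices with no removable vertices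
(min degree at least `σ(G')/2`) has a connected `k`-subgraph of density at least
`(k/(4N))·σ(G')`. -/
theorem stmt6 [Fintype V] [DecidableEq V] (G : SimpleGraph V) [DecidableRel G.Adj]
    (k : ℕ) (hk2 : 2 ≤ k) (hke : Even k) (hG : G.Connected)
    (hN : k < Fintype.card V)
    (hdeg : ∀ v : V, (G.degree v : ℝ) ≥ graphDensity G / 2) :
    ∃ S : Finset V, S.card = k ∧ (G.induce (S : Set V)).Connected ∧
      indDensity G S ≥ ((k : ℝ) / (4 * (Fintype.card V : ℝ))) * graphDensity G := by
  obtain ⟨S, hcard, hconn, hbound⟩ := grow G hG hdeg k (by omega) hN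
  refine ⟨S, hcard, hconn, ?_⟩
  have h2e : 2 * ((G.induce (S : Set V)).edgeSet.ncard : ℝ) = (eD G S : ℝ) := by
    exact_mod_cast congrArg (fun t : ℕ => (t : ℝ)) (handshake G S)
  rw [indDensity, graphDensity, hcard]
  have hk0 : (2:ℝ) ≤ (k : ℝ) := by exact_mod_cast hk2
  have hkn : (k : ℝ) + 1 ≤ (Fintype.card V : ℝ) := by
    have h : k + 1 ≤ Fintype.card V := by omega
    calc (k:ℝ) + 1 = ((k + 1 : ℕ) : ℝ) := by push_cast; ring
      _ ≤ _ := by exact_mod_cast h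
  set e2 : ℝ := (eD G S : ℝ) with he2
  set n : ℝ := (Fintype.card V : ℝ) with hn
  set m : ℝ := (G.edgeSet.ncard : ℝ) with hm
  set kR : ℝ := (k : ℝ) with hkR
  have hm0 : (0:ℝ) ≤ m := Nat.cast_nonneg _
  have he0 : (0:ℝ) ≤ e2 := Nat.cast_nonneg _
  have hn0 : (0:ℝ) < n := by linarith
  rw [h2e, ge_iff_le, div_mul_div_comm,
    div_le_div_iff₀ (by nlinarith : (0:ℝ) < 4 * n * n) (by linarith : (0:ℝ) < kR)]
  -- goal : kR * (2 * m) * kR ≤ e2 * (4 * n * n)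
  have hA : 4 * n * (e2 * (n * (n - 1))) ≥ 4 * n * (m * (kR * (kR - 1))) :=
    mul_le_mul_of_nonneg_left hbound (by linarith)
  have hfac : (0:ℝ) ≤ m * kR * (kR * n + kR - 2 * n) := by
    apply mul_nonneg (mul_nonneg hm0 (by linarith))
    nlinarith
  have key : 2 * (kR * kR * m) * (n - 1) ≤ (4 * (n * n) * e2) * (n - 1) := by
    nlinarith [hA, hfac]
  have h3 : 2 * (kR * kR * m) ≤ 4 * (n * n) * e2 :=
    le_of_mul_le_mul_right key (by linarith)
  linarith [h3]
end

section
/- Let G be a connected finite simple graph on n vertices and let k be an even integer with 4 ≤ k ≤ n. Then there exists a set S of exactly k vertices of G such that the induced subgraph G[S] is connected and σ*_k(G) ≤ (12 n²/k²)·σ(G[S]); that is, G contains a connected k-vertex subgraph whose density is at least k²/(12 n²) times the maximum density over all k-vertex subgraphs of G. -/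
open Finset

variable {V : Type*}

section StmtEightAux
open SimpleGraph
open scoped Classical

namespace StmtEight

/-- induced connectivity of a finite vertex set. -/
def Gconn (G : SimpleGraph V) (A : Finset V) : Prop := (G.induce (A : Set V)).Connected

lemma gconn_singleton (G : SimpleGraph V) (v : V) : Gconn G {v} := by
  rw [Gconn, Finset.coe_singleton, connected_induce_iff]
  apply (SimpleGraph.Subgraph.singletonSubgraph_connected (G := G) (v := v)).mono
  · rw [SimpleGraph.singletonSubgraph_le_iff]
    simp
  · simp

lemma Gconn.union {G : SimpleGraph V} {A B : Finset V} (hA : Gconn G A) (hB : Gconn G B)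
    {a b : V} (ha : a ∈ A) (hb : b ∈ B) (hab : a = b ∨ G.Adj a b) :
    Gconn G (A ∪ B) := by
  rw [Gconn, Finset.coe_union]
  rcases hab with h | h
  · exact induce_union_connected (Connected.preconnected hA) (Connected.preconnected hB) ⟨a, by simp [ha], by simp [h ▸ hb]⟩
  · exact connected_induce_union (Connected.preconnected hA) (Connected.preconnected hB) (by simpa using ha) (by simpa using hb) h

lemma Gconn.nonem {G : SimpleGraph V} {A : Finset V} (hA : Gconn G A) : A.Nonempty := by
  have h' : (G.induce (A : Set V)).Connected := hA
  obtain ⟨⟨x, hx⟩⟩ := h'.nonempty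
  exact ⟨x, by simpa using hx⟩


/-- A rooted parent structure on a graph. -/
structure ParStr (G : SimpleGraph V) (z : V) where
  par : V → V
  dp : V → ℕ
  par_z : par z = z
  dp_z : dp z = 0
  adjp : ∀ v, v ≠ z → G.Adj (par v) v
  dp_par : ∀ v, v ≠ z → dp (par v) + 1 = dp v
  dp_eq_zero : ∀ v, dp v = 0 → v = z

namespace ParStr

variable {G : SimpleGraph V} {z : V} (P : ParStr G z)

lemma dp_pos {v : V} (h : v ≠ z) : 1 ≤ P.dp v := by
  rcases Nat.eq_zero_or_pos (P.dp v) with h0 | h1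
  · exact absurd (P.dp_eq_zero v h0) h
  · exact h1

lemma iter_z (i : ℕ) : P.par^[i] z = z := by
  induction i with
  | zero => rfl
  | succ n ih => rw [Function.iterate_succ_apply', ih, P.par_z]

lemma dpIter (i : ℕ) (v : V) : P.dp (P.par^[i] v) = P.dp v - i := by
  induction i with
  | zero => rfl
  | succ n ih =>
    rw [Function.iterate_succ_apply']
    by_cases hz : P.par^[n] v = z
    · rw [hz, P.par_z, P.dp_z]
      rw [hz, P.dp_z] at ih
      omega
    · have := P.dp_par _ hz
      omega

lemma reach (v : V) : P.par^[P.dp v] v = z := by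
  generalize h : P.dp v = n
  induction n generalizing v with
  | zero => exact P.dp_eq_zero v h
  | succ n ih =>
    have hvz : v ≠ z := by
      intro hv; rw [hv, P.dp_z] at h; omega
    have h1 : P.dp (P.par v) = n := by have := P.dp_par v hvz; omega
    rw [Function.iterate_succ_apply]
    exact ih _ h1

/-- ancestor relation along parent chains (reflexive). -/
def anc (x w : V) : Prop := ∃ i, P.par^[i] w = x

lemma anc_refl (w : V) : P.anc w w := ⟨0, rfl⟩

lemma anc_z (w : V) : P.anc z w := ⟨P.dp w, P.reach w⟩

lemma anc_trans {x y w : V} (h1 : P.anc x w) (h2 : P.anc y x) : P.anc y w := by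
  obtain ⟨i, hi⟩ := h1
  obtain ⟨j, hj⟩ := h2
  exact ⟨j + i, by rw [Function.iterate_add_apply, hi, hj]⟩

lemma anc_dp_le {x w : V} (h : P.anc x w) : P.dp x ≤ P.dp w := by
  obtain ⟨i, hi⟩ := h
  have := P.dpIter i w
  rw [hi] at this
  omega

lemma anc_forced {x w : V} (h : P.anc x w) : P.par^[P.dp w - P.dp x] w = x := by
  obtain ⟨i, hi⟩ := h
  rcases le_or_gt i (P.dp w) with hle | hlt
  · have hdx : P.dp x = P.dp w - i := by
      have := P.dpIter i w; rw [hi] at this; omega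
    have : P.dp w - P.dp x = i := by omega
    rw [this, hi]
  · have hxz : x = z := by
      have h1 : P.par^[i] w = P.par^[i - P.dp w] (P.par^[P.dp w] w) := by
        rw [← Function.iterate_add_apply]
        congr 1
        omega
      rw [P.reach w, P.iter_z] at h1
      rw [hi] at h1; exact h1
    subst hxz
    rw [P.dp_z, Nat.sub_zero]
    exact P.reach w

lemma anc_eq_of_dp_eq {x y w : V} (hx : P.anc x w) (hy : P.anc y w)
    (h : P.dp x = P.dp y) : x = y := by
  have h1 := P.anc_forced hx
  have h2 := P.anc_forced hy
  rw [h] at h1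
  rw [h1] at h2
  exact h2

lemma anc_dp_lt {x w : V} (h : P.anc x w) (hne : x ≠ w) : P.dp x < P.dp w := by
  rcases lt_or_eq_of_le (P.anc_dp_le h) with h1 | h1
  · exact h1
  · exact absurd (P.anc_eq_of_dp_eq h (P.anc_refl w) h1) hne

lemma anc_total {x y w : V} (hx : P.anc x w) (hy : P.anc y w) :
    P.anc x y ∨ P.anc y x := by
  rcases le_total (P.dp x) (P.dp y) with h | h
  · left
    have h1 := P.anc_forced hx
    have h2 := P.anc_forced hy
    refine ⟨P.dp w - P.dp x - (P.dp w - P.dp y), ?_⟩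
    have hdy : P.dp y ≤ P.dp w := P.anc_dp_le hy
    have : P.dp w - P.dp x = (P.dp w - P.dp x - (P.dp w - P.dp y)) + (P.dp w - P.dp y) := by omega
    rw [this, Function.iterate_add_apply, h2] at h1
    exact h1
  · right
    have h1 := P.anc_forced hx
    have h2 := P.anc_forced hy
    refine ⟨P.dp w - P.dp y - (P.dp w - P.dp x), ?_⟩
    have hdx : P.dp x ≤ P.dp w := P.anc_dp_le hx
    have : P.dp w - P.dp y = (P.dp w - P.dp y - (P.dp w - P.dp x)) + (P.dp w - P.dp x) := by omega
    rw [this, Function.iterate_add_apply, h1] at h2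
    exact h2

lemma anc_par {w : V} : P.anc (P.par w) w := ⟨1, by simp⟩

lemma anc_mid {x w : V} (h : P.anc x w) {j : ℕ} (hj : j ≤ P.dp w - P.dp x) :
    P.anc x (P.par^[j] w) := by
  refine ⟨P.dp w - P.dp x - j, ?_⟩
  rw [← Function.iterate_add_apply]
  have : P.dp w - P.dp x - j + j = P.dp w - P.dp x := by omega
  rw [this]
  exact P.anc_forced h

lemma anc_iter (i : ℕ) (w : V) : P.anc (P.par^[i] w) w := ⟨i, rfl⟩


/-- `R` is closed under parents and contains the root. -/
def parClosed (R : Finset V) : Prop := z ∈ R ∧ ∀ w ∈ R, P.par w ∈ R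

lemma ancIn {R : Finset V} (hR : P.parClosed R) {w x : V} (hw : w ∈ R)
    (h : P.anc x w) : x ∈ R := by
  obtain ⟨i, hi⟩ := h
  subst hi
  induction i with
  | zero => exact hw
  | succ n ih => rw [Function.iterate_succ_apply']; exact hR.2 _ ih

/-- the set of descendants of `v` inside `R`. -/
noncomputable def sub (R : Finset V) (v : V) : Finset V := R.filter (fun w => P.anc v w)

lemma mem_sub {R : Finset V} {v w : V} : w ∈ P.sub R v ↔ w ∈ R ∧ P.anc v w := by
  simp [sub]

lemma sub_subset {R : Finset V} {v : V} : P.sub R v ⊆ R := Finset.filter_subset _ _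

lemma self_mem_sub {R : Finset V} {v : V} (hv : v ∈ R) : v ∈ P.sub R v :=
  P.mem_sub.2 ⟨hv, P.anc_refl v⟩

lemma sub_anc_subset {R : Finset V} {v x : V} (h : P.anc v x) :
    P.sub R x ⊆ P.sub R v := by
  intro w hw
  rw [mem_sub] at hw ⊢
  exact ⟨hw.1, P.anc_trans hw.2 h⟩

lemma exists_child {R : Finset V} {v w : V} (hR : P.parClosed R)
    (hw : w ∈ P.sub R v) (hne : w ≠ v) :
    ∃ c, c ∈ P.sub R v ∧ c ≠ v ∧ c ≠ z ∧ P.par c = v ∧ P.dp c = P.dp v + 1 ∧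
      w ∈ P.sub R c := by
  rw [mem_sub] at hw
  obtain ⟨hwR, hanc⟩ := hw
  have hdlt : P.dp v < P.dp w := P.anc_dp_lt hanc (Ne.symm hne)
  set i := P.dp w - P.dp v - 1 with hi
  set c := P.par^[i] w with hc
  have hancc : P.anc c w := P.anc_iter i w
  have hcR : c ∈ R := P.ancIn hR hwR hancc
  have hdc : P.dp c = P.dp v + 1 := by
    rw [hc, P.dpIter]; omega
  have hpc : P.par c = v := by
    have h1 : P.par^[i + 1] w = P.par c := by
      rw [Function.iterate_succ_apply', hc]
    have h2 : i + 1 = P.dp w - P.dp v := by omega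
    rw [h2] at h1
    rw [P.anc_forced hanc] at h1
    exact h1.symm
  have hcz : c ≠ z := by
    intro h; rw [h, P.dp_z] at hdc; omega
  have hcv : c ≠ v := by
    intro h; rw [h] at hdc; omega
  have hvc : P.anc v c := ⟨1, by simpa using hpc⟩
  refine ⟨c, P.mem_sub.2 ⟨hcR, hvc⟩, hcv, hcz, hpc, hdc, P.mem_sub.2 ⟨hwR, hancc⟩⟩

lemma sub_child_subset {R : Finset V} {v c : V} (hdc : P.dp v < P.dp c)
    (hvc : P.anc v c) : P.sub R c ⊆ (P.sub R v).erase v := by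
  intro x hx
  rw [mem_sub] at hx
  rw [Finset.mem_erase, mem_sub]
  have hdx : P.dp c ≤ P.dp x := P.anc_dp_le hx.2
  constructor
  · intro h; subst h; omega
  · exact ⟨hx.1, P.anc_trans hx.2 hvc⟩

lemma sub_sdiff {R X : Finset V} {v : V} : P.sub (R \ X) v = P.sub R v \ X := by
  ext w
  simp only [mem_sub, Finset.mem_sdiff]
  tauto

lemma parClosed_sdiff {R X : Finset V} (hR : P.parClosed R)
    (hX : ∀ x ∈ X, P.sub R x ⊆ X) (hzX : z ∉ X) : P.parClosed (R \ X) := by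
  constructor
  · exact Finset.mem_sdiff.2 ⟨hR.1, hzX⟩
  · intro w hw
    rw [Finset.mem_sdiff] at hw ⊢
    refine ⟨hR.2 _ hw.1, ?_⟩
    intro hpX
    exact hw.2 (hX _ hpX (P.mem_sub.2 ⟨hw.1, P.anc_par⟩))

lemma sub_closed {R : Finset V} {c x : V} (hx : x ∈ P.sub R c) :
    P.sub R x ⊆ P.sub R c := P.sub_anc_subset (P.mem_sub.1 hx).2

/-- key disjointness: if `x ∈ sub R v`, `x ∉ sub R c` where `c` is a child of `v`,
then no descendant of `x` lies in `sub R c`. -/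
lemma sub_disjoint_child {R : Finset V} {v c x w : V}
    (hdc : P.dp c = P.dp v + 1)
    (hx : x ∈ P.sub R v) (hxc : x ∉ P.sub R c) (hdx : P.dp v < P.dp x)
    (hw : w ∈ P.sub R x) : w ∉ P.sub R c := by
  intro hwc
  rw [mem_sub] at hw hwc hx
  rcases P.anc_total hw.2 hwc.2 with h | h
  ·
    -- h : P.anc x c
    have : P.dp x ≤ P.dp c := P.anc_dp_le h
    have hxc' : P.dp x = P.dp c := by omega
    have : x = c := P.anc_eq_of_dp_eq hw.2 hwc.2 hxc'
    subst this
    exact hxc (P.mem_sub.2 ⟨hx.1, P.anc_refl x⟩)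
  · -- h : P.anc c x
    exact hxc (P.mem_sub.2 ⟨hx.1, h⟩)


/-- reach-invariant: every element of `Q` has its parent chain to `v` inside `Q`. -/
def reachIn (Q : Finset V) (v : V) : Prop :=
  ∀ u ∈ Q, ∃ i, P.par^[i] u = v ∧ ∀ j, j ≤ i → P.par^[j] u ∈ Q


lemma gconn_of_reach' {A : Finset V} {v : V}
    (hv : v ∈ A) (h : P.reachIn A v) : Gconn G A := by
  generalize hN : A.card = N
  induction N using Nat.strong_induction_on generalizing A with
  | _ N ih =>
  by_cases hA : A = {v}
  · subst hA; exact gconn_singleton G v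
  -- pick w ≠ v in A with maximal depth
  have hne : (A.erase v).Nonempty := by
    rcases Finset.eq_singleton_iff_nonempty_unique_mem.not.1 hA with h'
    push_neg at h'
    rcases h' ⟨v, hv⟩ with ⟨w, hw, hwv⟩
    exact ⟨w, Finset.mem_erase.2 ⟨hwv, hw⟩⟩
  obtain ⟨w, hwmem, hwmax⟩ := Finset.exists_max_image (A.erase v) P.dp hne
  rw [Finset.mem_erase] at hwmem
  obtain ⟨hwv, hwA⟩ := hwmem
  -- w is not on the chain of any other u
  have hchain : ∀ u ∈ A.erase w, ∃ i, P.par^[i] u = v ∧ ∀ j, j ≤ i → P.par^[j] u ∈ A.erase w := by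
    intro u hu
    rw [Finset.mem_erase] at hu
    obtain ⟨huw, huA⟩ := hu
    by_cases huv : u = v
    · subst huv
      exact ⟨0, rfl, by intro j hj; interval_cases j; simpa [Finset.mem_erase] using ⟨huw, hv⟩⟩
    · obtain ⟨i, hiv, hj⟩ := h u huA
      refine ⟨i, hiv, ?_⟩
      intro j hjle
      rw [Finset.mem_erase]
      refine ⟨?_, hj j hjle⟩
      intro heq
      -- par^[j] u = w : then anc w u with w ≠ u hence dp w < dp u ≤ dp w
      have hancwu : P.anc w u := heq ▸ P.anc_iter j u
      have : P.dp w < P.dp u := P.anc_dp_lt hancwu (Ne.symm huw)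
      have : P.dp u ≤ P.dp w := hwmax u (Finset.mem_erase.2 ⟨huv, huA⟩)
      omega
  have hvA' : v ∈ A.erase w := Finset.mem_erase.2 ⟨fun hh => hwv hh.symm, hv⟩
  have hcard : (A.erase w).card < N := by
    rw [← hN]
    exact Finset.card_erase_lt_of_mem hwA
  have hconn' : Gconn G (A.erase w) := ih _ hcard hvA' hchain rfl
  -- attach w
  obtain ⟨i, hiv, hj⟩ := h w hwA
  have hipos : 1 ≤ i := by
    rcases Nat.eq_zero_or_pos i with h0 | h1
    · subst h0; exact absurd hiv hwv
    · exact h1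
  have hpw_ne : P.par w ≠ w := by
    intro hpw
    have : ∀ j, P.par^[j] w = w := by
      intro j; induction j with
      | zero => rfl
      | succ n ihn => rw [Function.iterate_succ_apply', ihn, hpw]
    rw [this i] at hiv; exact hwv hiv
  have hwz : w ≠ z := by
    intro hh; subst hh; exact hpw_ne P.par_z
  have hpwA : P.par w ∈ A.erase w := by
    rw [Finset.mem_erase]
    refine ⟨hpw_ne, ?_⟩
    have := hj 1 hipos
    simpa using this
  have := Gconn.union hconn' (gconn_singleton G w) hpwA (Finset.mem_singleton_self w)
    (Or.inr (P.adjp w hwz))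
  have heq : A.erase w ∪ {w} = A := by
    ext x
    simp only [Finset.mem_union, Finset.mem_erase, Finset.mem_singleton]
    constructor
    · rintro (⟨_, hx⟩ | rfl) <;> [exact hx; exact hwA]
    · intro hx
      by_cases hxw : x = w
      · right; exact hxw
      · left; exact ⟨hxw, hx⟩
  rwa [heq] at this


/-- THE CHUNK LEMMA : inside the descendants of `v` in `R` one can find a
descendant-closed set `X` of any prescribed size `t`, whose removal keeps the
rest parent-closed, together with a connected "carrier" `Q ⊇ X` of size at
most `t + (r - dp v) + 1`. -/
lemma chunk {r : ℕ} (hr : ∀ w, P.dp w ≤ r) :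
    ∀ (N : ℕ) (R : Finset V) (v : V), (P.sub R v).card = N → P.parClosed R → v ∈ R →
    ∀ t, t + 1 ≤ (P.sub R v).card →
    ∃ X Q : Finset V,
      X ⊆ (P.sub R v).erase v ∧ X.card = t ∧ (∀ x ∈ X, P.sub R x ⊆ X) ∧
      X ⊆ Q ∧ Q ⊆ P.sub R v ∧ v ∈ Q ∧ Q.card + P.dp v ≤ t + r + 1 ∧ P.reachIn Q v := by
  intro N
  induction N using Nat.strong_induction_on with
  | _ N ih =>
  intro R v hN hR hv t ht
  rcases Nat.eq_zero_or_pos t with ht0 | htpos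
  · subst ht0
    refine ⟨∅, {v}, by simp, by simp, by simp, by simp, ?_, Finset.mem_singleton_self v, ?_, ?_⟩
    · simpa using P.self_mem_sub hv
    · have := hr v; simp; omega
    · intro u hu
      rw [Finset.mem_singleton] at hu
      subst hu
      exact ⟨0, rfl, by intro j hj; interval_cases j; simp⟩
  -- t ≥ 1 : there is a child
  have hcard2 : 1 < (P.sub R v).card := by omega
  obtain ⟨w, hwmem, hwv⟩ := Finset.exists_mem_ne hcard2 v
  obtain ⟨c, hcmem, hcv, hcz, hpc, hdc, hwc⟩ := P.exists_child hR hwmem hwv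
  have hancvc : P.anc v c := (P.mem_sub.1 hcmem).2
  have hsubc : P.sub R c ⊆ (P.sub R v).erase v :=
    P.sub_child_subset (by omega) hancvc
  have hcR : c ∈ R := P.sub_subset hcmem
  have hsc1 : 1 ≤ (P.sub R c).card := Finset.card_pos.2 ⟨c, P.self_mem_sub hcR⟩
  have hscN : (P.sub R c).card < N := by
    have h1 : (P.sub R c).card ≤ ((P.sub R v).erase v).card := Finset.card_le_card hsubc
    have h2 : ((P.sub R v).erase v).card = (P.sub R v).card - 1 :=
      Finset.card_erase_of_mem (P.self_mem_sub hv)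
    omega
  rcases le_or_gt (t + 1) (P.sub R c).card with hcase | hcase
  · -- recurse into the child c
    obtain ⟨X, Q, hX1, hX2, hX3, hXQ, hQsub, hvQ, hQcard, hQreach⟩ :=
      ih _ hscN R c rfl hR hcR t hcase
    refine ⟨X, insert v Q, ?_, hX2, hX3, ?_, ?_, Finset.mem_insert_self v Q, ?_, ?_⟩
    · exact fun x hx => hsubc (Finset.erase_subset _ _ (hX1 hx))
    · exact hXQ.trans (Finset.subset_insert v Q)
    · intro x hx
      rcases Finset.mem_insert.1 hx with rfl | hx
      · exact P.self_mem_sub hv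
      · exact (P.sub_anc_subset hancvc) (hQsub hx)
    · have := Finset.card_insert_le v Q
      omega
    · intro u hu
      rcases Finset.mem_insert.1 hu with rfl | hu
      · exact ⟨0, rfl, by intro j hj; interval_cases j; simpa using Finset.mem_insert_self u Q⟩
      · obtain ⟨i, hiv, hj⟩ := hQreach u hu
        refine ⟨i + 1, ?_, ?_⟩
        · rw [Function.iterate_succ_apply', hiv, hpc]
        · intro j hjle
          rcases Nat.lt_or_ge j (i + 1) with hlt | hge
          · exact Finset.mem_insert_of_mem (hj j (by omega))
          · have : j = i + 1 := by omega
            subst this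
            rw [Function.iterate_succ_apply', hiv, hpc]
            exact Finset.mem_insert_self v Q
  · -- remove the whole subtree of c and recurse at v
    set sc := P.sub R c with hscdef
    have hzsc : z ∉ sc := by
      intro hzm
      have : P.dp c ≤ P.dp z := P.anc_dp_le (P.mem_sub.1 hzm).2
      rw [P.dp_z] at this
      omega
    have hR' : P.parClosed (R \ sc) :=
      P.parClosed_sdiff hR (fun x hx => P.sub_closed hx) hzsc
    have hvR' : v ∈ R \ sc := by
      rw [Finset.mem_sdiff]
      refine ⟨hv, ?_⟩
      intro hmem
      exact (Finset.mem_erase.1 (hsubc hmem)).1 rfl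
    have hsub' : P.sub (R \ sc) v = P.sub R v \ sc := P.sub_sdiff
    have hscsub : sc ⊆ P.sub R v := P.sub_anc_subset hancvc
    have hcard' : (P.sub (R \ sc) v).card = N - sc.card := by
      rw [hsub', Finset.card_sdiff_of_subset hscsub, hN]
    have hcard'N : (P.sub (R \ sc) v).card < N := by omega
    have ht' : (t - sc.card) + 1 ≤ (P.sub (R \ sc) v).card := by
      rw [hcard', ← hN]
      omega
    obtain ⟨X', Q', hX1, hX2, hX3, hXQ, hQsub, hvQ, hQcard, hQreach⟩ :=
      ih _ hcard'N (R \ sc) v rfl hR' hvR' (t - sc.card) ht'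
    have hX'subv : X' ⊆ (P.sub R v).erase v := by
      intro x hx
      have h1 := hX1 hx
      rw [Finset.mem_erase, hsub', Finset.mem_sdiff] at h1
      exact Finset.mem_erase.2 ⟨h1.1, h1.2.1⟩
    have hX'nsc : ∀ x ∈ X', x ∉ sc := by
      intro x hx
      have h1 := hX1 hx
      rw [Finset.mem_erase, hsub', Finset.mem_sdiff] at h1
      exact h1.2.2
    have hdisj : Disjoint X' sc := by
      rw [Finset.disjoint_left]
      exact fun a ha => hX'nsc a ha
    refine ⟨X' ∪ sc, Q' ∪ sc, ?_, ?_, ?_, ?_, ?_, ?_, ?_, ?_⟩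
    · exact Finset.union_subset hX'subv hsubc
    · rw [Finset.card_union_of_disjoint hdisj, hX2]
      omega
    · -- descendant-closedness of X' ∪ sc
      intro x hx w hw
      rcases Finset.mem_union.1 hx with hx' | hxsc
      · -- x ∈ X'
        have hxv : x ∈ (P.sub R v).erase v := hX'subv hx'
        rw [Finset.mem_erase] at hxv
        have hdxv : P.dp v < P.dp x := P.anc_dp_lt (P.mem_sub.1 hxv.2).2 (Ne.symm hxv.1)
        have hwnsc : w ∉ sc :=
          P.sub_disjoint_child hdc hxv.2 (hX'nsc x hx') hdxv hw
        have hwsub' : w ∈ P.sub (R \ sc) x := by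
          rw [P.sub_sdiff, Finset.mem_sdiff]
          exact ⟨hw, hwnsc⟩
        exact Finset.mem_union_left _ (hX3 x hx' hwsub')
      · exact Finset.mem_union_right _ (P.sub_closed hxsc hw)
    · exact Finset.union_subset_union hXQ (Finset.Subset.refl sc)
    · refine Finset.union_subset ?_ hscsub
      intro q hq
      have := hQsub hq
      rw [hsub', Finset.mem_sdiff] at this
      exact this.1
    · exact Finset.mem_union_left _ hvQ
    · have h1 : (Q' ∪ sc).card ≤ Q'.card + sc.card := Finset.card_union_le _ _
      omega
    · -- reach invariant for Q' ∪ sc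
      intro u hu
      rcases Finset.mem_union.1 hu with hu' | husc
      · obtain ⟨i, hiv, hj⟩ := hQreach u hu'
        exact ⟨i, hiv, fun j hjle => Finset.mem_union_left _ (hj j hjle)⟩
      · -- u ∈ sc : go up to c, then one more step to v
        have hancc : P.anc c u := (P.mem_sub.1 husc).2
        have huR : u ∈ R := P.sub_subset husc
        set i0 := P.dp u - P.dp c with hi0
        have hic : P.par^[i0] u = c := P.anc_forced hancc
        refine ⟨i0 + 1, ?_, ?_⟩
        · rw [Function.iterate_succ_apply', hic, hpc]
        · intro j hjle
          rcases Nat.lt_or_ge j (i0 + 1) with hlt | hge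
          · refine Finset.mem_union_right _ ?_
            rw [P.mem_sub]
            have hjle' : j ≤ i0 := by omega
            refine ⟨P.ancIn hR huR (P.anc_iter j u), P.anc_mid hancc hjle'⟩
          · have : j = i0 + 1 := by omega
            subst this
            rw [Function.iterate_succ_apply', hic, hpc]
            exact Finset.mem_union_left _ hvQ

lemma sub_eq_singleton {R : Finset V} {v : V} (hv : v ∈ R)
    (h : ∀ x ∈ P.sub R v, P.dp x ≤ P.dp v) : P.sub R v = {v} := by
  apply Finset.eq_singleton_iff_unique_mem.2
  refine ⟨P.self_mem_sub hv, ?_⟩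
  intro x hx
  have h1 : P.anc v x := (P.mem_sub.1 hx).2
  by_contra hne
  exact absurd (P.anc_dp_lt h1 (fun he => hne he.symm)) (by have := h x hx; omega)

lemma sub_root {R : Finset V} (hR : P.parClosed R) : P.sub R z = R := by
  ext w
  rw [mem_sub]
  exact ⟨fun h => h.1, fun h => ⟨h, P.anc_z w⟩⟩

/-- closed tour of the subtree of `v` inside `R`. -/
lemma tour_closed :
    ∀ (N : ℕ) (R : Finset V) (v : V), (P.sub R v).card = N → P.parClosed R → v ∈ R →
    ∃ l : List V, l ≠ [] ∧ List.Chain' G.Adj l ∧ l.head? = some v ∧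
      l.getLast? = some v ∧ l.toFinset = P.sub R v ∧
      l.length + 1 ≤ 2 * (P.sub R v).card := by
  intro N
  induction N using Nat.strong_induction_on with
  | _ N ih =>
  intro R v hN hR hv
  by_cases hone : P.sub R v = {v}
  · refine ⟨[v], by simp, List.isChain_singleton _, by simp, by simp, by simp [hone], by simp [hone]⟩
  · have hex : ∃ w ∈ P.sub R v, w ≠ v := by
      by_contra hno
      push_neg at hno
      apply hone
      apply Finset.eq_singleton_iff_unique_mem.2 ⟨P.self_mem_sub hv, hno⟩
    obtain ⟨w, hwmem, hwv⟩ := hex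
    obtain ⟨c, hcmem, hcv, hcz, hpc, hdc, hwc⟩ := P.exists_child hR hwmem hwv
    have hancvc : P.anc v c := (P.mem_sub.1 hcmem).2
    have hsubc : P.sub R c ⊆ (P.sub R v).erase v := P.sub_child_subset (by omega) hancvc
    have hcR : c ∈ R := P.sub_subset hcmem
    set sc := P.sub R c with hscdef
    have hzsc : z ∉ sc := by
      intro hzm
      have := P.anc_dp_le (P.mem_sub.1 hzm).2
      rw [P.dp_z] at this; omega
    have hR' : P.parClosed (R \ sc) := P.parClosed_sdiff hR (fun x hx => P.sub_closed hx) hzsc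
    have hvR' : v ∈ R \ sc := by
      rw [Finset.mem_sdiff]
      exact ⟨hv, fun hm => (Finset.mem_erase.1 (hsubc hm)).1 rfl⟩
    have hsub' : P.sub (R \ sc) v = P.sub R v \ sc := P.sub_sdiff
    have hscsub : sc ⊆ P.sub R v := P.sub_anc_subset hancvc
    have hsc1 : 1 ≤ sc.card := Finset.card_pos.2 ⟨c, P.self_mem_sub hcR⟩
    have hscN : sc.card < N := by
      have h1 : sc.card ≤ ((P.sub R v).erase v).card := Finset.card_le_card hsubc
      have h2 := Finset.card_erase_of_mem (P.self_mem_sub hv)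
      have h3 : 1 ≤ (P.sub R v).card := Finset.card_pos.2 ⟨v, P.self_mem_sub hv⟩
      omega
    have hcard' : (P.sub (R \ sc) v).card = (P.sub R v).card - sc.card := by
      rw [hsub', Finset.card_sdiff_of_subset hscsub]
    have hc1N : (P.sub (R \ sc) v).card < N := by
      have h3 : 1 ≤ (P.sub R v).card := Finset.card_pos.2 ⟨v, P.self_mem_sub hv⟩
      omega
    obtain ⟨l₁, hl₁ne, hl₁ch, hl₁h, hl₁g, hl₁fin, hl₁len⟩ :=
      ih _ hc1N (R \ sc) v rfl hR' hvR'
    obtain ⟨l₂, hl₂ne, hl₂ch, hl₂h, hl₂g, hl₂fin, hl₂len⟩ :=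
      ih _ hscN R c rfl hR hcR
    have hadjvc : G.Adj v c := by
      have := P.adjp c hcz
      rwa [hpc] at this
    refine ⟨l₁ ++ (l₂ ++ [v]), by simp [hl₁ne], ?_, ?_, ?_, ?_, ?_⟩
    · rw [List.Chain', List.isChain_append]
      refine ⟨hl₁ch, ?_, ?_⟩
      · rw [List.isChain_append]
        refine ⟨hl₂ch, List.isChain_singleton _, ?_⟩
        intro x hx y hy
        rw [hl₂g] at hx
        simp at hx hy
        subst hx; subst hy
        exact hadjvc.symm
      · intro x hx y hy
        rw [hl₁g] at hx
        rw [List.head?_append_of_ne_nil _ hl₂ne, hl₂h] at hy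
        simp at hx hy
        subst hx; subst hy
        exact hadjvc
    · rw [List.head?_append_of_ne_nil _ hl₁ne]
      exact hl₁h
    · rw [List.getLast?_append_of_ne_nil _ (by simp : l₂ ++ [v] ≠ [])]
      rw [List.getLast?_append_of_ne_nil _ (by simp : [v] ≠ ([] : List V))]
      simp
    · rw [List.toFinset_append, List.toFinset_append, hl₁fin, hl₂fin, hsub']
      have hvmem : v ∈ P.sub R v \ sc := by
        rw [Finset.mem_sdiff]
        exact ⟨P.self_mem_sub hv, fun hm => (Finset.mem_erase.1 (hsubc hm)).1 rfl⟩
      simp only [List.toFinset_cons, List.toFinset_nil, insert_empty_eq]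
      rw [Finset.union_comm sc {v}, ← Finset.union_assoc]
      rw [Finset.union_eq_left.2 (Finset.singleton_subset_iff.2 hvmem)]
      exact Finset.sdiff_union_of_subset hscsub
    · rw [List.length_append, List.length_append, List.length_singleton]
      rw [hcard'] at hl₁len
      have he1 : P.sub R c = sc := rfl
      rw [he1] at hl₂len
      have hfb : sc.card ≤ (P.sub R v).card := Finset.card_le_card hscsub
      omega

/-- open tour: ends deep, saving the height. -/
lemma tour_open :
    ∀ (N : ℕ) (R : Finset V) (v : V), (P.sub R v).card = N → P.parClosed R → v ∈ R →
    ∃ l : List V, l ≠ [] ∧ List.Chain' G.Adj l ∧ l.head? = some v ∧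
      l.toFinset = P.sub R v ∧
      l.length + 1 + (P.sub R v).sup P.dp ≤ 2 * (P.sub R v).card + P.dp v := by
  intro N
  induction N using Nat.strong_induction_on with
  | _ N ih =>
  intro R v hN hR hv
  have hnon : (P.sub R v).Nonempty := ⟨v, P.self_mem_sub hv⟩
  obtain ⟨w, hwmem, hwsup⟩ := Finset.exists_mem_eq_sup _ hnon P.dp
  by_cases hwv : w = v
  · -- subtree is a single vertex
    have hsing : P.sub R v = {v} := by
      apply P.sub_eq_singleton hv
      intro x hx
      have hxle := Finset.le_sup (f := P.dp) hx
      rw [hwsup, hwv] at hxle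
      exact hxle
    refine ⟨[v], by simp, List.isChain_singleton _, by simp, by simp [hsing], ?_⟩
    rw [hsing]
    simp
  · obtain ⟨c, hcmem, hcv, hcz, hpc, hdc, hwc⟩ := P.exists_child hR hwmem hwv
    have hancvc : P.anc v c := (P.mem_sub.1 hcmem).2
    have hsubc : P.sub R c ⊆ (P.sub R v).erase v := P.sub_child_subset (by omega) hancvc
    have hcR : c ∈ R := P.sub_subset hcmem
    set sc := P.sub R c with hscdef
    have hzsc : z ∉ sc := by
      intro hzm
      have := P.anc_dp_le (P.mem_sub.1 hzm).2
      rw [P.dp_z] at this; omega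
    have hR' : P.parClosed (R \ sc) := P.parClosed_sdiff hR (fun x hx => P.sub_closed hx) hzsc
    have hvR' : v ∈ R \ sc := by
      rw [Finset.mem_sdiff]
      exact ⟨hv, fun hm => (Finset.mem_erase.1 (hsubc hm)).1 rfl⟩
    have hsub' : P.sub (R \ sc) v = P.sub R v \ sc := P.sub_sdiff
    have hscsub : sc ⊆ P.sub R v := P.sub_anc_subset hancvc
    have hsc1 : 1 ≤ sc.card := Finset.card_pos.2 ⟨c, P.self_mem_sub hcR⟩
    have hscN : sc.card < N := by
      have h1 : sc.card ≤ ((P.sub R v).erase v).card := Finset.card_le_card hsubc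
      have h2 := Finset.card_erase_of_mem (P.self_mem_sub hv)
      have h3 : 1 ≤ (P.sub R v).card := Finset.card_pos.2 ⟨v, P.self_mem_sub hv⟩
      omega
    have hcard' : (P.sub (R \ sc) v).card = (P.sub R v).card - sc.card := by
      rw [hsub', Finset.card_sdiff_of_subset hscsub]
    have hc1N : (P.sub (R \ sc) v).card < N := by
      have h3 : 1 ≤ (P.sub R v).card := Finset.card_pos.2 ⟨v, P.self_mem_sub hv⟩
      omega
    obtain ⟨l₁, hl₁ne, hl₁ch, hl₁h, hl₁g, hl₁fin, hl₁len⟩ :=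
      P.tour_closed _ (R \ sc) v rfl hR' hvR'
    obtain ⟨l₂, hl₂ne, hl₂ch, hl₂h, hl₂fin, hl₂len⟩ :=
      ih _ hscN R c rfl hR hcR
    have hadjvc : G.Adj v c := by
      have := P.adjp c hcz
      rwa [hpc] at this
    refine ⟨l₁ ++ l₂, by simp [hl₁ne], ?_, ?_, ?_, ?_⟩
    · rw [List.Chain', List.isChain_append]
      refine ⟨hl₁ch, hl₂ch, ?_⟩
      intro x hx y hy
      rw [hl₁g] at hx
      rw [hl₂h] at hy
      simp at hx hy
      subst hx; subst hy
      exact hadjvc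
    · rw [List.head?_append_of_ne_nil _ hl₁ne]
      exact hl₁h
    · rw [List.toFinset_append, hl₁fin, hl₂fin, hsub']
      exact Finset.sdiff_union_of_subset hscsub
    · rw [List.length_append]
      have he1 : P.sub R c = sc := rfl
      rw [he1] at hl₂len
      have hsupc : P.dp w ≤ sc.sup P.dp := Finset.le_sup (f := P.dp) hwc
      have hsupv : (P.sub R v).sup P.dp = P.dp w := hwsup
      have hfb : sc.card ≤ (P.sub R v).card := Finset.card_le_card hscsub
      rw [hcard'] at hl₁len
      rw [hsupv]
      omega


end ParStr

lemma peel {G : SimpleGraph V} {z : V} (P : ParStr G z) {r cap h : ℕ}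
    (hr : ∀ w, P.dp w ≤ r) (hcap : cap + r + 1 = h) (hcappos : 1 ≤ cap) :
    ∀ (N : ℕ) (R : Finset V), R.card = N → P.parClosed R →
    ∃ L : List (Finset V),
      (∀ Q ∈ L, Gconn G Q ∧ Q.card ≤ h) ∧ (∀ w ∈ R, ∃ Q ∈ L, w ∈ Q) ∧
      L.length ≤ (R.card - h + cap - 1) / cap + 1 := by
  intro N
  induction N using Nat.strong_induction_on with
  | _ N ih =>
  intro R hN hR
  rcases le_or_gt R.card h with hle | hgt
  · -- single part
    refine ⟨[R], ?_, ?_, by simp⟩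
    · intro Q hQ
      rw [List.mem_singleton] at hQ
      subst hQ
      constructor
      · apply P.gconn_of_reach' hR.1
        intro u hu
        exact ⟨P.dp u, P.reach u, fun j hj => P.ancIn hR hu (P.anc_iter j u)⟩
      · exact hle
    · intro w hw
      exact ⟨R, by simp, hw⟩
  · -- peel a chunk
    have hsubR : P.sub R z = R := P.sub_root hR
    have htle : cap + 1 ≤ (P.sub R z).card := by rw [hsubR]; omega
    obtain ⟨X, Q, hX1, hX2, hX3, hXQ, hQsub, hzQ, hQcard, hQreach⟩ :=
      P.chunk hr _ R z rfl hR hR.1 cap htle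
    have hzX : z ∉ X := by
      intro hzm
      exact (Finset.mem_erase.1 (hX1 hzm)).1 rfl
    have hXR : X ⊆ R := by
      intro x hx
      exact P.sub_subset (Finset.erase_subset _ _ (hX1 hx))
    have hR' : P.parClosed (R \ X) := P.parClosed_sdiff hR hX3 hzX
    have hcard' : (R \ X).card = R.card - cap := by
      rw [Finset.card_sdiff_of_subset hXR, hX2]
    have hlt : (R \ X).card < N := by omega
    obtain ⟨L', hL'1, hL'2, hL'3⟩ := ih _ hlt (R \ X) rfl hR'
    refine ⟨Q :: L', ?_, ?_, ?_⟩
    · intro Q' hQ'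
      rcases List.mem_cons.1 hQ' with rfl | hQ'
      · constructor
        · exact P.gconn_of_reach' hzQ hQreach
        · have := P.dp_z
          omega
      · exact hL'1 _ hQ'
    · intro w hw
      by_cases hwX : w ∈ X
      · exact ⟨Q, by simp, hXQ hwX⟩
      · obtain ⟨Q', hQ'L, hwQ'⟩ := hL'2 w (Finset.mem_sdiff.2 ⟨hw, hwX⟩)
        exact ⟨Q', by simp [hQ'L], hwQ'⟩
    · rw [List.length_cons]
      rw [hcard'] at hL'3
      have harith : (R.card - cap - h + cap - 1) / cap + 1 + 1 ≤
          (R.card - h + cap - 1) / cap + 1 := by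
        set s := R.card - h with hs
        have hs1 : 1 ≤ s := by omega
        have heq : R.card - cap - h = s - cap := by omega
        rw [heq]
        rcases le_or_gt cap s with hcs | hcs
        · have h1 : s - cap + cap - 1 = s - 1 := by omega
          have h2 : s + cap - 1 = s - 1 + cap := by omega
          rw [h1, h2, Nat.add_div_right _ (by omega : 0 < cap)]
        · have h1 : s - cap = 0 := by omega
          rw [h1]
          have h2 : (0 + cap - 1) / cap = 0 := Nat.div_eq_of_lt (by omega)
          rw [h2]
          have h3 : cap ≤ s + cap - 1 := by omega
          have h4 : 1 ≤ (s + cap - 1) / cap := (Nat.one_le_div_iff (by omega)).2 h3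
          omega
      exact le_trans (by omega) harith


variable [Fintype V]

/-- existence of a BFS parent structure. -/
lemma exists_parStr (G : SimpleGraph V) (hG : G.Connected) (z : V) :
    Nonempty (ParStr G z) := by
  have hach : ∀ v : V, v ≠ z → ∃ u, G.Adj u v ∧ G.dist z u + 1 = G.dist z v := by
    intro v hv
    obtain ⟨p, hp⟩ := hG.exists_walk_length_eq_dist z v
    have hd1 : 1 ≤ G.dist z v := by
      rcases Nat.eq_zero_or_pos (G.dist z v) with h0 | h1
      · rcases (SimpleGraph.dist_eq_zero_iff_eq_or_not_reachable).1 h0 with he | hnr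
        · exact absurd he.symm hv
        · exact absurd (hG.preconnected z v) hnr
      · exact h1
    set q := p.reverse with hq
    have hqlen : q.length = G.dist z v := by rw [hq, SimpleGraph.Walk.length_reverse, hp]
    cases hq2 : q with
    | nil =>
      rw [hq2] at hqlen
      simp at hqlen
      simp at hd1
    | @cons _ u _ hadj q' =>
      have hq'len : q'.length + 1 = G.dist z v := by
        rw [hq2] at hqlen
        simpa using hqlen
      have hle1 : G.dist z u ≤ q'.length := by
        have := SimpleGraph.dist_le q'.reverse
        simpa using this
      obtain ⟨w', hw'⟩ := hG.exists_walk_length_eq_dist z u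
      have hle2 : G.dist z v ≤ G.dist z u + 1 := by
        have := SimpleGraph.dist_le (w'.concat hadj.symm)
        rwa [SimpleGraph.Walk.length_concat, hw'] at this
      exact ⟨u, hadj.symm, by omega⟩
  choose f hf using hach
  refine ⟨⟨fun v => if hv : v = z then z else f v hv, G.dist z, by simp, by simp,
    ?_, ?_, ?_⟩⟩
  · intro v hv
    show G.Adj (if hv : v = z then z else f v hv) v
    rw [dif_neg hv]
    exact (hf v hv).1
  · intro v hv
    show G.dist z (if hv : v = z then z else f v hv) + 1 = G.dist z v
    rw [dif_neg hv]
    exact (hf v hv).2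
  · intro v hv
    rcases (SimpleGraph.dist_eq_zero_iff_eq_or_not_reachable).1 hv with he | hnr
    · exact he.symm
    · exact absurd (hG.preconnected z v) hnr

/-- connectivity of vertex sets of chain-adjacent lists. -/
lemma gconn_of_chain (G : SimpleGraph V) :
    ∀ l : List V, l ≠ [] → List.Chain' G.Adj l → Gconn G l.toFinset := by
  intro l
  induction l with
  | nil => intro h; exact absurd rfl h
  | cons a t ih =>
    intro _ hch
    cases t with
    | nil => simpa using gconn_singleton G a
    | cons b t' =>
      have hch' : List.Chain' G.Adj (b :: t') := hch.tail
      have hadj : G.Adj a b := (List.isChain_cons_cons.1 hch).1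
      have hB := ih (by simp) hch'
      have hu := Gconn.union (gconn_singleton G a) hB (Finset.mem_singleton_self a)
        (by simp : b ∈ (b :: t').toFinset) (Or.inr hadj)
      have heq : ({a} : Finset V) ∪ (b :: t').toFinset = (a :: b :: t').toFinset := by
        rw [List.toFinset_cons (a := a), Finset.insert_eq]
      rwa [heq] at hu

/-- chop a chain-adjacent list into connected blocks of size at most `h`. -/
lemma chop (G : SimpleGraph V) (h : ℕ) (hpos : 1 ≤ h) :
    ∀ (n : ℕ) (l : List V), l.length = n → List.Chain' G.Adj l →
    ∃ L : List (Finset V), (∀ Q ∈ L, Gconn G Q ∧ Q.card ≤ h) ∧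
      (∀ w ∈ l, ∃ Q ∈ L, w ∈ Q) ∧ L.length ≤ (l.length + h - 1) / h := by
  intro n
  induction n using Nat.strong_induction_on with
  | _ n ih =>
  intro l hn hch
  rcases List.eq_nil_or_concat l with rfl | hcons
  · exact ⟨[], by simp, by simp, by simp⟩
  have hlne : l ≠ [] := by
    rcases hcons with ⟨l', a, rfl⟩; simp
  rcases le_or_gt l.length h with hle | hgt
  · refine ⟨[l.toFinset], ?_, ?_, ?_⟩
    · intro Q hQ
      rw [List.mem_singleton] at hQ
      subst hQ
      exact ⟨gconn_of_chain G l hlne hch, le_trans (List.toFinset_card_le l) hle⟩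
    · intro w hw
      exact ⟨l.toFinset, by simp, List.mem_toFinset.2 hw⟩
    · have h1 : 1 ≤ l.length := List.length_pos_iff.2 hlne
      have : h ≤ l.length + h - 1 := by omega
      simpa using (Nat.one_le_div_iff (by omega)).2 this
  · -- split
    have htake : (l.take h).length = h := by
      rw [List.length_take]
      omega
    have hdrop : (l.drop h).length = l.length - h := List.length_drop
    have hdlt : (l.drop h).length < n := by omega
    obtain ⟨L', hL'1, hL'2, hL'3⟩ := ih _ hdlt (l.drop h) rfl (hch.drop h)
    have htne : l.take h ≠ [] := by
      intro hh
      have := congrArg List.length hh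
      rw [htake] at this
      simp at this
      omega
    refine ⟨(l.take h).toFinset :: L', ?_, ?_, ?_⟩
    · intro Q hQ
      rcases List.mem_cons.1 hQ with rfl | hQ
      · refine ⟨gconn_of_chain G _ htne (hch.take h), ?_⟩
        exact le_trans (List.toFinset_card_le _) (le_of_eq htake)
      · exact hL'1 _ hQ
    · intro w hw
      have hw' : w ∈ l.take h ++ l.drop h := by
        rw [List.take_append_drop]; exact hw
      rcases List.mem_append.1 hw' with h1 | h1
      · exact ⟨(l.take h).toFinset, by simp, List.mem_toFinset.2 h1⟩
      · obtain ⟨Q, hQ, hwQ⟩ := hL'2 w h1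
        exact ⟨Q, by simp [hQ], hwQ⟩
    · rw [List.length_cons]
      rw [hdrop] at hL'3
      have harith : (l.length - h + h - 1) / h + 1 ≤ (l.length + h - 1) / h := by
        have h1 : l.length - h + h - 1 = l.length - 1 := by omega
        have h2 : l.length + h - 1 = (l.length - 1) + h := by omega
        rw [h1, h2, Nat.add_div_right _ (by omega : 0 < h)]
      omega

set_option maxHeartbeats 1000000 in
/-- THE COVER LEMMA. -/
lemma cover (G : SimpleGraph V) (hG : G.Connected) (h : ℕ) (hh : 2 ≤ h)
    (hnh : 2 * h ≤ Fintype.card V) :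
    ∃ L : List (Finset V), (∀ Q ∈ L, Gconn G Q ∧ Q.card ≤ h) ∧
      (∀ w : V, ∃ Q ∈ L, w ∈ Q) ∧
      L.length * (L.length + 1) * h ^ 2 ≤ 6 * (Fintype.card V) ^ 2 := by
  set n := Fintype.card V with hn
  have hnpos : 0 < n := by omega
  have hz : Nonempty V := Fintype.card_pos_iff.1 (by omega)
  obtain ⟨z⟩ := hz
  obtain ⟨P⟩ := exists_parStr G hG z
  set r := Finset.univ.sup P.dp with hrdef
  have hr : ∀ w, P.dp w ≤ r := fun w => Finset.le_sup (Finset.mem_univ w)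
  have hP4 : 4 * (4 + 1) * h ^ 2 ≤ 6 * n ^ 2 := by
    have h1 : (2 * h) ^ 2 ≤ n ^ 2 := Nat.pow_le_pow_left hnh 2
    nlinarith
  have h46n : 4 ≤ 6 * n := by omega
  set m := Nat.findGreatest (fun mm => mm * (mm + 1) * h ^ 2 ≤ 6 * n ^ 2) (6 * n) with hm
  have hma4 : 4 ≤ m := Nat.le_findGreatest h46n hP4
  have hma : m * (m + 1) * h ^ 2 ≤ 6 * n ^ 2 :=
    Nat.findGreatest_spec (P := fun mm => mm * (mm + 1) * h ^ 2 ≤ 6 * n ^ 2) h46n hP4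
  have hmlt : m < 6 * n := by
    rcases lt_or_eq_of_le (Nat.findGreatest_le
      (P := fun mm => mm * (mm + 1) * h ^ 2 ≤ 6 * n ^ 2) (6 * n)) with hlt | heq
    · exact hlt
    · exfalso
      have hbad := hma
      rw [hm, heq] at hbad
      have h4 : 4 ≤ h ^ 2 := by nlinarith
      nlinarith
  have hmagt : ¬ ((m + 1) * (m + 1 + 1) * h ^ 2 ≤ 6 * n ^ 2) :=
    Nat.findGreatest_is_greatest (P := fun mm => mm * (mm + 1) * h ^ 2 ≤ 6 * n ^ 2)
      (n := 6 * n) (by omega) (by omega)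
  clear_value m
  clear hm
  have hmagt' : 6 * n ^ 2 < (m + 1) * (m + 2) * h ^ 2 := by
    have he : (m + 1) * (m + 1 + 1) * h ^ 2 = (m + 1) * (m + 2) * h ^ 2 := by ring
    omega
  have huniv : P.parClosed Finset.univ := ⟨Finset.mem_univ z, fun w _ => Finset.mem_univ _⟩
  rcases le_or_gt (2 * n) (m * h + r + 1) with hcase | hcase
  · -- CASE A : walk
    obtain ⟨l, hlne, hlch, _, hlfin, hllen⟩ :=
      P.tour_open _ Finset.univ z rfl huniv (Finset.mem_univ z)
    rw [P.sub_root huniv] at hlfin hllen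
    have hcardu : (Finset.univ : Finset V).card = n := rfl
    rw [← hrdef, hcardu, P.dp_z] at hllen
    have hlen2 : l.length ≤ m * h := by omega
    obtain ⟨L, hL1, hL2, hL3⟩ := chop G h (by omega) _ l rfl hlch
    refine ⟨L, hL1, ?_, ?_⟩
    · intro w
      apply hL2
      rw [← List.mem_toFinset, hlfin]
      exact Finset.mem_univ w
    · have hcount : L.length ≤ m := by
        have h2 : (l.length + h - 1) / h < m + 1 := by
          rw [Nat.div_lt_iff_lt_mul (by omega : 0 < h)]
          have he : (m + 1) * h = m * h + h := by ring
          omega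
        omega
      calc L.length * (L.length + 1) * h ^ 2 ≤ m * (m + 1) * h ^ 2 := by
            apply Nat.mul_le_mul_right
            exact Nat.mul_le_mul hcount (by omega)
      _ ≤ 6 * n ^ 2 := hma
  · -- CASE B : peel
    have hkey : (2 * m - 1) * n < m ^ 2 * h := by
      have hpoly : (2 * m - 1) ^ 2 * ((m + 1) * (m + 2)) ≤ 6 * m ^ 4 := by
        zify [show (1:ℕ) ≤ 2 * m by omega]
        have hm4z : (4:ℤ) ≤ (m:ℤ) := by exact_mod_cast hma4
        have e : 6 * (m:ℤ) ^ 4 =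
            (2 * (m:ℤ) - 1) ^ 2 * (((m:ℤ) + 1) * ((m:ℤ) + 2)) +
            (2 * (m:ℤ) ^ 3 * ((m:ℤ) - 4) + 3 * (m:ℤ) ^ 2 + 5 * (m:ℤ) - 2) := by ring
        have hA : (0:ℤ) ≤ 2 * (m:ℤ) ^ 3 * ((m:ℤ) - 4) :=
          mul_nonneg (by positivity) (by linarith)
        have hB : (0:ℤ) ≤ 3 * (m:ℤ) ^ 2 + 5 * (m:ℤ) - 2 := by nlinarith [sq_nonneg (m:ℤ)]
        linarith
      have e1 : ((2 * m - 1) * n) ^ 2 * 6 = (2 * m - 1) ^ 2 * (6 * n ^ 2) := by ring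
      have e2 : (m ^ 2 * h) ^ 2 * 6 = (6 * m ^ 4) * h ^ 2 := by ring
      have l1 : (2 * m - 1) ^ 2 * (6 * n ^ 2) < (2 * m - 1) ^ 2 * ((m + 1) * (m + 2) * h ^ 2) :=
        mul_lt_mul_of_pos_left hmagt' (pow_pos (by omega : 0 < 2 * m - 1) 2)
      have l2 : (2 * m - 1) ^ 2 * ((m + 1) * (m + 2) * h ^ 2) ≤ (6 * m ^ 4) * h ^ 2 := by
        calc (2 * m - 1) ^ 2 * ((m + 1) * (m + 2) * h ^ 2)
            = ((2 * m - 1) ^ 2 * ((m + 1) * (m + 2))) * h ^ 2 := by ring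
        _ ≤ (6 * m ^ 4) * h ^ 2 := Nat.mul_le_mul_right _ hpoly
      have hsq : ((2 * m - 1) * n) ^ 2 < (m ^ 2 * h) ^ 2 := by omega
      exact lt_of_pow_lt_pow_left₀ 2 (by positivity) hsq
    have h2n : 2 * n < (m + 1) * h := by
      have l1 : 2 * m ^ 2 ≤ (2 * m - 1) * (m + 1) := by
        zify [show (1:ℕ) ≤ 2 * m by omega]
        have hm4z : (4:ℤ) ≤ (m:ℤ) := by exact_mod_cast hma4
        have e : (2 * (m:ℤ) - 1) * ((m:ℤ) + 1) = 2 * (m:ℤ) ^ 2 + (m:ℤ) - 1 := by ring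
        linarith
      have l2 : (2 * m - 1) * (2 * n) < (2 * m ^ 2) * h := by
        calc (2 * m - 1) * (2 * n) = 2 * ((2 * m - 1) * n) := by ring
        _ < 2 * (m ^ 2 * h) := by omega
        _ = (2 * m ^ 2) * h := by ring
      have l3 : (2 * m - 1) * (2 * n) < (2 * m - 1) * ((m + 1) * h) := by
        calc (2 * m - 1) * (2 * n) < (2 * m ^ 2) * h := l2
        _ ≤ ((2 * m - 1) * (m + 1)) * h := Nat.mul_le_mul_right _ l1
        _ = (2 * m - 1) * ((m + 1) * h) := by ring
      exact lt_of_mul_lt_mul_left l3 (by omega)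
    have hrh : r + 2 ≤ h := by
      have he : (m + 1) * h = m * h + h := by ring
      omega
    set cap := h - r - 1 with hcapdef
    have hcap : cap + r + 1 = h := by omega
    have hcappos : 1 ≤ cap := by omega
    obtain ⟨L, hL1, hL2, hL3⟩ := peel P hr hcap hcappos _ Finset.univ rfl huniv
    have hcardu : (Finset.univ : Finset V).card = n := rfl
    rw [hcardu] at hL3
    have hgoal6 : n - h + cap ≤ m * cap := by
      have hkeyz : (2 * (m:ℤ) - 1) * n < (m:ℤ) ^ 2 * h := by
        zify [show (1:ℕ) ≤ 2 * m by omega] at hkey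
        exact hkey
      have hcasez : (m:ℤ) * h + r + 1 < 2 * n := by exact_mod_cast hcase
      have hcapz : (cap:ℤ) + r + 1 = h := by exact_mod_cast hcap
      have hm4z : (4:ℤ) ≤ (m:ℤ) := by exact_mod_cast hma4
      have hm1 : (0:ℤ) ≤ (m:ℤ) - 1 := by linarith [hm4z]
      have hD : (0:ℤ) ≤ 2 * (n:ℤ) - 2 - (m:ℤ) * (h:ℤ) - (r:ℤ) := by linarith [hcasez]
      zify [show h ≤ n by omega]
      nlinarith [mul_nonneg hm1 hD, hkeyz, hcasez, hcapz]
    have hcount : L.length ≤ m := by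
      have hdiv : (n - h + cap - 1) / cap < m := by
        rw [Nat.div_lt_iff_lt_mul (by omega : 0 < cap)]
        omega
      omega
    refine ⟨L, hL1, fun w => hL2 w (Finset.mem_univ w), ?_⟩
    calc L.length * (L.length + 1) * h ^ 2 ≤ m * (m + 1) * h ^ 2 := by
          apply Nat.mul_le_mul_right
          exact Nat.mul_le_mul hcount (by omega)
    _ ≤ 6 * n ^ 2 := hma


lemma sym2_map_inj {α β : Type*} {f : α → β} (hf : Function.Injective f) :
    Function.Injective (Sym2.map f) := by
  intro e1 e2 he
  induction e1 using Sym2.ind with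
  | _ a b =>
  induction e2 using Sym2.ind with
  | _ c d =>
  rw [Sym2.map_pair_eq, Sym2.map_pair_eq, Sym2.eq_iff] at he
  rw [Sym2.eq_iff]
  rcases he with ⟨h1, h2⟩ | ⟨h1, h2⟩
  · exact Or.inl ⟨hf h1, hf h2⟩
  · exact Or.inr ⟨hf h1, hf h2⟩

/-- the edges of `G` lying inside a finite vertex set. -/
noncomputable def edgesIn (G : SimpleGraph V) (A : Finset V) : Finset (Sym2 V) :=
  (G.edgeSet.toFinite.toFinset).filter (fun e => ∀ v ∈ e, v ∈ A)

lemma mem_edgesIn {G : SimpleGraph V} {A : Finset V} {e : Sym2 V} :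
    e ∈ edgesIn G A ↔ e ∈ G.edgeSet ∧ ∀ v ∈ e, v ∈ A := by
  rw [edgesIn, Finset.mem_filter, Set.Finite.mem_toFinset]

lemma edgesIn_mono {G : SimpleGraph V} {A B : Finset V} (h : A ⊆ B) :
    edgesIn G A ⊆ edgesIn G B := by
  intro e he
  rw [mem_edgesIn] at he ⊢
  exact ⟨he.1, fun v hv => h (he.2 v hv)⟩

lemma ncard_induce_eq (G : SimpleGraph V) (A : Finset V) :
    (G.induce (A : Set V)).edgeSet.ncard = (edgesIn G A).card := by
  have himg : Sym2.map (Subtype.val) '' (G.induce (A : Set V)).edgeSet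
      = (edgesIn G A : Set (Sym2 V)) := by
    ext e
    constructor
    · rintro ⟨e', he', rfl⟩
      revert he'
      induction e' using Sym2.ind with
      | _ a b =>
      intro he'
      rw [SimpleGraph.mem_edgeSet] at he'
      have hadj : G.Adj a.1 b.1 := he'
      rw [Sym2.map_pair_eq]
      simp only [Finset.mem_coe]
      rw [mem_edgesIn]
      refine ⟨(SimpleGraph.mem_edgeSet _).2 hadj, ?_⟩
      intro v hv
      rcases Sym2.mem_iff.1 hv with rfl | rfl
      · exact a.2
      · exact b.2
    · intro he
      simp only [Finset.mem_coe] at he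
      revert he
      induction e using Sym2.ind with
      | _ x y =>
      intro he
      rw [mem_edgesIn] at he
      obtain ⟨hedge, hmem⟩ := he
      have hx : x ∈ A := hmem x (Sym2.mem_iff.2 (Or.inl rfl))
      have hy : y ∈ A := hmem y (Sym2.mem_iff.2 (Or.inr rfl))
      have hadj : G.Adj x y := (SimpleGraph.mem_edgeSet _).1 hedge
      refine ⟨s((⟨x, hx⟩ : (A : Set V)), (⟨y, hy⟩ : (A : Set V))), ?_, ?_⟩
      · rw [SimpleGraph.mem_edgeSet]
        exact hadj
      · rw [Sym2.map_pair_eq]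
  calc (G.induce (A : Set V)).edgeSet.ncard
      = (Sym2.map (Subtype.val) '' (G.induce (A : Set V)).edgeSet).ncard :=
        (Set.ncard_image_of_injective _ (sym2_map_inj Subtype.val_injective)).symm
  _ = ((edgesIn G A : Set (Sym2 V))).ncard := by rw [himg]
  _ = (edgesIn G A).card := Set.ncard_coe_finset _

lemma exists_edge (G : SimpleGraph V) (hG : G.Connected) (hcard : 2 ≤ Fintype.card V) :
    (edgesIn G Finset.univ).Nonempty := by
  obtain ⟨a, b, hab⟩ := Fintype.exists_pair_of_one_lt_card (α := V) (by omega)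
  obtain ⟨W⟩ := hG.preconnected a b
  cases W with
  | nil => exact absurd rfl hab
  | @cons _ c _ hadj W' =>
    refine ⟨s(a, c), ?_⟩
    rw [mem_edgesIn]
    exact ⟨(SimpleGraph.mem_edgeSet _).2 hadj, fun v _ => Finset.mem_univ v⟩

lemma cross (G : SimpleGraph V) (A : Finset V) :
    ∀ {u p : V} (_W : G.Walk u p), u ∉ A → p ∈ A →
    ∃ a b, G.Adj a b ∧ a ∉ A ∧ b ∈ A := by
  intro u p W
  induction W with
  | nil => intro hu hp; exact absurd hp hu
  | cons hadj W' ih =>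
    intro hu hp
    rename_i x y w
    by_cases hc : y ∈ A
    · exact ⟨x, y, hadj, hu, hc⟩
    · exact ih hc hp

lemma grow_one (G : SimpleGraph V) (hG : G.Connected) (A : Finset V) (hA : Gconn G A)
    (hcard : A.card < Fintype.card V) :
    ∃ S, A ⊆ S ∧ S.card = A.card + 1 ∧ Gconn G S := by
  obtain ⟨p, hp⟩ := hA.nonem
  obtain ⟨u, hu⟩ : ∃ u, u ∉ A := by
    by_contra hno
    push_neg at hno
    have : A = Finset.univ := Finset.eq_univ_iff_forall.2 hno
    rw [this, Finset.card_univ] at hcard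
    omega
  obtain ⟨W⟩ := hG.preconnected u p
  obtain ⟨a, b, hadj, haA, hbA⟩ := cross G A W hu hp
  refine ⟨insert a A, Finset.subset_insert a A, Finset.card_insert_of_notMem haA, ?_⟩
  have hun := Gconn.union (gconn_singleton G a) hA (Finset.mem_singleton_self a) hbA
    (Or.inr hadj)
  rwa [← Finset.insert_eq] at hun

lemma grow (G : SimpleGraph V) (hG : G.Connected) :
    ∀ (j : ℕ) (A : Finset V), Gconn G A → A.card + j ≤ Fintype.card V →
    ∃ S, A ⊆ S ∧ S.card = A.card + j ∧ Gconn G S := by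
  intro j
  induction j with
  | zero => exact fun A hA _ => ⟨A, Finset.Subset.refl A, rfl, hA⟩
  | succ jj ih =>
    intro A hA hle
    obtain ⟨S, hAS, hcard, hS⟩ := ih A hA (by omega)
    obtain ⟨S', hSS', hcard', hS'⟩ := grow_one G hG S hS (by omega)
    exact ⟨S', hAS.trans hSS', by omega, hS'⟩

/-- MAIN COMBINATORIAL LEMMA. -/
lemma main_comb (G : SimpleGraph V) (hG : G.Connected) {h k : ℕ} (hk : k = 2 * h)
    (hh : 2 ≤ h) (hkn : k ≤ Fintype.card V) :
    ∃ S : Finset V, S.card = k ∧ Gconn G S ∧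
      k ^ 2 * (edgesIn G Finset.univ).card ≤
        12 * (Fintype.card V) ^ 2 * (edgesIn G S).card := by
  set n := Fintype.card V with hn
  obtain ⟨L, hL1, hL2, hL3⟩ := cover G hG h hh (by omega)
  set m := L.length with hm
  have hes : 1 ≤ (edgesIn G Finset.univ).card :=
    Finset.card_pos.2 (exists_edge G hG (by omega))
  set es := (edgesIn G Finset.univ).card with hesdef
  -- the assignment
  have hcov : ∀ v : V, ∃ i : Fin m, v ∈ L.get i := by
    intro v
    obtain ⟨Q, hQL, hvQ⟩ := hL2 v
    obtain ⟨i, hi⟩ := List.mem_iff_get.1 hQL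
    exact ⟨i, by rw [hi]; exact hvQ⟩
  have hm1 : 1 ≤ m := by
    have hz : Nonempty V := Fintype.card_pos_iff.1 (by omega)
    obtain ⟨z⟩ := hz
    obtain ⟨i, _⟩ := hcov z
    have := i.2
    omega
  set a : V → Fin m := fun v => (hcov v).choose with ha
  have haQ : ∀ v, v ∈ L.get (a v) := fun v => (hcov v).choose_spec
  -- pigeonhole over unordered pairs of blocks
  set M := (Finset.univ : Finset (Sym2 (Fin m))).card with hM
  have h2M : 2 * M = m * (m + 1) := by
    have hco : M = (m + 1).choose 2 := by
      rw [hM, Finset.card_univ, Sym2.card, Fintype.card_fin]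
    have he2 : (m + 1).choose 2 = (m + 1) * m / 2 := by
      rw [Nat.choose_two_right, Nat.add_sub_cancel]
    have hdvd : 2 ∣ (m + 1) * m := by
      rcases Nat.even_or_odd m with he | ho
      · exact Dvd.dvd.mul_left he.two_dvd _
      · exact Dvd.dvd.mul_right (Odd.add_one ho).two_dvd _
    rw [hco, he2, Nat.mul_div_cancel' hdvd, Nat.mul_comm]
  have hMpos : 0 < M := by
    have hmm : 1 * 2 ≤ m * (m + 1) := Nat.mul_le_mul hm1 (by omega)
    omega
  set n0 := (es - 1) / M with hn0
  have hlt : M * n0 < es := by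
    have h1 : n0 * M ≤ es - 1 := Nat.div_mul_le_self _ _
    have h2 : M * n0 = n0 * M := by ring
    omega
  obtain ⟨y, hy, hylt⟩ := Finset.exists_lt_card_fiber_of_mul_lt_card_of_maps_to
    (f := fun e => Sym2.map a e) (fun e _ => Finset.mem_univ _) hlt
  have hMfib : es ≤ M * ((edgesIn G Finset.univ).filter (fun e => Sym2.map a e = y)).card := by
    have hdm := Nat.div_add_mod (es - 1) M
    have hmod : (es - 1) % M < M := Nat.mod_lt _ hMpos
    have hexp : M * (n0 + 1) = M * n0 + M := by ring
    have h1 : es ≤ M * (n0 + 1) := by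
      rw [hn0] at *
      omega
    have h2 : M * (n0 + 1) ≤ M * ((edgesIn G Finset.univ).filter
        (fun e => Sym2.map a e = y)).card :=
      Nat.mul_le_mul_left _ (by omega)
    omega
  clear hy hlt
  revert hylt hMfib
  induction y using Sym2.ind with
  | _ i j =>
  intro hylt hMfib
  have hgetmem : ∀ i' : Fin m, L.get i' ∈ L := fun i' => by
    have := List.get_mem L i'
    simpa using this
  set S₀ := L.get i ∪ L.get j with hS₀
  set fib := (edgesIn G Finset.univ).filter (fun e => Sym2.map a e = s(i, j)) with hfib
  have hfibS : fib ⊆ edgesIn G S₀ := by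
    intro e he
    rw [hfib, Finset.mem_filter] at he
    obtain ⟨he1, he2⟩ := he
    revert he1 he2
    induction e using Sym2.ind with
    | _ x y' =>
    intro he1 he2
    rw [Sym2.map_pair_eq, Sym2.eq_iff] at he2
    rw [mem_edgesIn] at he1 ⊢
    refine ⟨he1.1, ?_⟩
    intro v hv
    rcases Sym2.mem_iff.1 hv with rfl | rfl
    · rcases he2 with ⟨h1, _⟩ | ⟨h1, _⟩
      · exact Finset.mem_union_left _ (h1 ▸ haQ v)
      · exact Finset.mem_union_right _ (h1 ▸ haQ v)
    · rcases he2 with ⟨_, h2⟩ | ⟨_, h2⟩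
      · exact Finset.mem_union_right _ (h2 ▸ haQ v)
      · exact Finset.mem_union_left _ (h2 ▸ haQ v)
  have hfibne : fib.Nonempty := Finset.card_pos.1 (Nat.lt_of_le_of_lt (Nat.zero_le _) hylt)
  have hconnS₀ : Gconn G S₀ := by
    by_cases hij : i = j
    · subst hij
      rw [hS₀, Finset.union_self]
      exact (hL1 _ (hgetmem i)).1
    · obtain ⟨e, he⟩ := hfibne
      rw [hfib, Finset.mem_filter] at he
      obtain ⟨he1, he2⟩ := he
      revert he1 he2
      induction e using Sym2.ind with
      | _ x y' =>
      intro he1 he2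
      rw [Sym2.map_pair_eq, Sym2.eq_iff] at he2
      have hadj : G.Adj x y' := (SimpleGraph.mem_edgeSet _).1 ((mem_edgesIn.1 he1).1)
      rcases he2 with ⟨h1, h2⟩ | ⟨h1, h2⟩
      · exact Gconn.union (hL1 _ (hgetmem i)).1 (hL1 _ (hgetmem j)).1
          (h1 ▸ haQ x) (h2 ▸ haQ y') (Or.inr hadj)
      · exact Gconn.union (hL1 _ (hgetmem i)).1 (hL1 _ (hgetmem j)).1
          (h2 ▸ haQ y') (h1 ▸ haQ x) (Or.inr hadj.symm)
  have hS₀card : S₀.card ≤ k := by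
    have h1 : S₀.card ≤ (L.get i).card + (L.get j).card := Finset.card_union_le _ _
    have h2 : (L.get i).card ≤ h := (hL1 _ (hgetmem i)).2
    have h3 : (L.get j).card ≤ h := (hL1 _ (hgetmem j)).2
    omega
  obtain ⟨S, hS₀S, hScard, hSconn⟩ := grow G hG (k - S₀.card) S₀ hconnS₀ (by omega)
  have hScard' : S.card = k := by omega
  refine ⟨S, hScard', hSconn, ?_⟩
  have hfibcard : fib.card ≤ (edgesIn G S).card :=
    Finset.card_le_card (hfibS.trans (edgesIn_mono hS₀S))
  have hkey : es ≤ M * (edgesIn G S).card :=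
    le_trans hMfib (Nat.mul_le_mul_left _ hfibcard)
  have hstep : k ^ 2 * es ≤ (2 * (m * (m + 1)) * h ^ 2) * (edgesIn G S).card := by
    calc k ^ 2 * es = 4 * h ^ 2 * es := by rw [hk]; ring
    _ ≤ 4 * h ^ 2 * (M * (edgesIn G S).card) := Nat.mul_le_mul_left _ hkey
    _ = (2 * (2 * M) * h ^ 2) * (edgesIn G S).card := by ring
    _ = (2 * (m * (m + 1)) * h ^ 2) * (edgesIn G S).card := by rw [h2M]
  have hstep2 : (2 * (m * (m + 1)) * h ^ 2) * (edgesIn G S).card ≤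
      12 * n ^ 2 * (edgesIn G S).card := by
    apply Nat.mul_le_mul_right
    calc 2 * (m * (m + 1)) * h ^ 2 = 2 * (m * (m + 1) * h ^ 2) := by ring
    _ ≤ 2 * (6 * n ^ 2) := Nat.mul_le_mul_left _ hL3
    _ = 12 * n ^ 2 := by ring
  exact le_trans hstep hstep2


end StmtEight
end StmtEightAux

/-- every connected graph has a connected `k`-subgraph whose density is
at least `k²/(12n²)` times `σ*_k(G)`. -/
theorem stmt8 [Fintype V] (G : SimpleGraph V) (hG : G.Connected) (k : ℕ)
    (hke : Even k) (hk4 : 4 ≤ k) (hkn : k ≤ Fintype.card V) :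
    ∃ S : Finset V, S.card = k ∧ (G.induce (S : Set V)).Connected ∧
      maxKDensity G k ≤ (12 * (Fintype.card V : ℝ) ^ 2 / (k : ℝ) ^ 2) * indDensity G S := by

  classical
  obtain ⟨h, hkh⟩ := hke
  have hk2h : k = 2 * h := by omega
  have hh2 : 2 ≤ h := by omega
  obtain ⟨S, hScard, hSconn, hSineq⟩ := StmtEight.main_comb G hG hk2h hh2 hkn
  refine ⟨S, hScard, hSconn, ?_⟩
  set n := Fintype.card V with hn
  set es := (StmtEight.edgesIn G Finset.univ).card with hes
  set eS := (StmtEight.edgesIn G S).card with heS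
  have hESeq : G.edgeSet.ncard = es := by
    rw [hes, StmtEight.edgesIn]
    rw [Finset.filter_true_of_mem (fun e _ => fun v _ => Finset.mem_univ v)]
    exact Set.ncard_eq_toFinset_card _ _
  have hkpos : (0:ℝ) < (k:ℝ) := by
    have : 0 < k := by omega
    exact_mod_cast this
  have hub : maxKDensity G k ≤ 2 * (es:ℝ) / (k:ℝ) := by
    unfold maxKDensity
    apply Real.sSup_le
    · rintro x ⟨H, hHk, rfl⟩
      unfold subDensity
      rw [hHk]
      have h1 : H.edgeSet.ncard ≤ es := by
        rw [← hESeq]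
        exact Set.ncard_le_ncard (SimpleGraph.Subgraph.edgeSet_subset H) (Set.toFinite _)
      have h2 : (H.edgeSet.ncard : ℝ) ≤ (es : ℝ) := by exact_mod_cast h1
      gcongr
    · positivity
  have hR : (2 * (es:ℝ) / (k:ℝ)) ≤ 12 * (n:ℝ) ^ 2 / (k:ℝ) ^ 2 * indDensity G S := by
    unfold indDensity
    rw [hScard, StmtEight.ncard_induce_eq G S, ← heS]
    rw [div_mul_div_comm]
    rw [div_le_div_iff₀ (by positivity) (by positivity)]
    have hcast : ((k:ℝ)) ^ 2 * (es:ℝ) ≤ 12 * (n:ℝ) ^ 2 * (eS:ℝ) := by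
      exact_mod_cast hSineq
    nlinarith [mul_le_mul_of_nonneg_left hcast (by positivity : (0:ℝ) ≤ 2 * (k:ℝ)), hkpos]
  exact le_trans hub hR
end

section
/- Let G be a connected finite simple graph on n vertices, let k be an even integer with 4 ≤ k ≤ n, let V_h be a set of k/2 vertices of G of highest degrees, and let d_h = (2/k)·∑_{v ∈ V_h} d_G(v) be the average degree (in G) of the vertices of V_h. Then there exists a set S of exactly k vertices of G such that G[S] is connected and σ(G[S]) ≥ (√k/(2n))·d_h. -/
open Finset

variable {V : Type*}

set_option linter.unusedSectionVars false
set_option maxHeartbeats 1000000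

lemma conn_card_le_edges {W : Type*} [Fintype W] (H : SimpleGraph W) (hc : H.Connected) :
    Fintype.card W ≤ H.edgeSet.ncard + 1 := by
  classical
  obtain ⟨r⟩ := hc.nonempty
  have key : ∀ v : W, v ≠ r → ∃ u, H.Adj v u ∧ H.dist u r < H.dist v r := by
    intro v hv
    obtain ⟨p, hp⟩ := (hc v r).exists_walk_length_eq_dist
    have hd : 0 < H.dist v r := hc.pos_dist_of_ne hv
    cases p with
    | nil => simp at hd
    | cons h q =>
      refine ⟨_, h, ?_⟩
      have : H.dist _ r ≤ q.length := SimpleGraph.dist_le q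
      simp [SimpleGraph.Walk.length_cons] at hp
      omega
  choose u hadj hlt using key
  have hfin : H.edgeSet.Finite := Set.toFinite _
  have hinj : Function.Injective (fun v : {x : W // x ≠ r} =>
      (⟨s(v.1, u v.1 v.2), (H.mem_edgeSet).2 (hadj v.1 v.2)⟩ : H.edgeSet)) := by
    rintro ⟨v, hv⟩ ⟨w, hw⟩ h
    simp only [Subtype.mk.injEq, Sym2.eq, Sym2.rel_iff', Prod.mk.injEq, Prod.swap_prod_mk] at h
    rcases h with ⟨h1, _⟩ | ⟨h1, h2⟩
    · exact Subtype.ext h1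
    · exfalso
      have a := hlt v hv
      have b := hlt w hw
      rw [← h1] at b; rw [h2] at a
      omega
  have hle := Fintype.card_le_of_injective _ hinj
  have h1 : Fintype.card {x : W // x ≠ r} = Fintype.card W - 1 := by
    simp [Fintype.card_subtype_compl]
  have h2 : Fintype.card H.edgeSet = H.edgeSet.ncard := by
    rw [Set.ncard_eq_toFinset_card', Set.toFinset_card]
  rw [h1, h2] at hle
  omega

section helpers
variable [Fintype V] [DecidableEq V] (G : SimpleGraph V) [DecidableRel G.Adj]

lemma cutCount_eq_sum (S T : Finset V) :
    cutCount G S T = ∑ x ∈ S, (T.filter (fun y => G.Adj x y)).card := by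
  unfold cutCount
  rw [Finset.card_filter, Finset.sum_product]
  exact Finset.sum_congr rfl fun x hx => (Finset.card_filter _ _).symm

lemma cutCount_comm (S T : Finset V) : cutCount G S T = cutCount G T S := by
  rw [cutCount_eq_sum, cutCount_eq_sum]
  simp only [Finset.card_filter]
  rw [Finset.sum_comm]
  refine Finset.sum_congr rfl fun x hx => Finset.sum_congr rfl fun y hy => ?_
  simp [G.adj_comm]

lemma cutCount_mono {S S' : Finset V} (h : S ⊆ S') : cutCount G S S ≤ cutCount G S' S' := by
  apply Finset.card_le_card
  exact Finset.filter_subset_filter _ (Finset.product_subset_product h h)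

lemma two_mul_induce_edges (S : Finset V) :
    2 * (G.induce (S : Set V)).edgeSet.ncard = cutCount G S S := by
  classical
  haveI : DecidableRel (G.induce (S : Set V)).Adj :=
    fun a b => inferInstanceAs (Decidable (G.Adj a b))
  have h1 : (G.induce (S : Set V)).edgeSet.ncard = (G.induce (S : Set V)).edgeFinset.card := by
    rw [SimpleGraph.edgeFinset, Set.ncard_eq_toFinset_card']
  rw [h1, SimpleGraph.two_mul_card_edgeFinset]
  apply Finset.card_bij (fun p _ => ((p.1 : V), (p.2 : V)))
  · rintro ⟨a, b⟩ hp
    simp only [Finset.mem_filter, Finset.mem_univ, true_and] at hp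
    simp only [Finset.mem_filter, Finset.mem_product]
    exact ⟨⟨a.2, b.2⟩, hp⟩
  · rintro ⟨a, b⟩ _ ⟨c, d⟩ _ h
    simp only [Prod.mk.injEq] at h
    exact Prod.ext (Subtype.ext h.1) (Subtype.ext h.2)
  · rintro ⟨a, b⟩ hp
    simp only [Finset.mem_filter, Finset.mem_product] at hp
    refine ⟨(⟨a, hp.1.1⟩, ⟨b, hp.1.2⟩), ?_, rfl⟩
    simp only [Finset.mem_filter, Finset.mem_univ, true_and]
    exact hp.2

lemma card_coe_set (S : Finset V) : Fintype.card ((S : Set V) : Type _) = S.card := by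
  simp

lemma induce_singleton_connected (v : V) : (G.induce ({v} : Set V)).Connected := by
  rw [SimpleGraph.connected_iff_exists_forall_reachable]
  refine ⟨⟨v, rfl⟩, ?_⟩
  rintro ⟨w, hw⟩
  cases hw
  rfl

lemma walk_cross {a b : V} (p : G.Walk a b) (A : Finset V) (ha : a ∈ A) (hb : b ∉ A) :
    ∃ u w, u ∈ A ∧ w ∉ A ∧ G.Adj u w := by
  induction p with
  | nil => exact absurd ha hb
  | @cons x y z h q ih =>
    by_cases hy : y ∈ A
    · exact ih hy hb
    · exact ⟨x, y, ha, hy, h⟩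

lemma grow_s10 (hG : G.Connected) :
    ∀ t (A : Finset V), A.Nonempty → (G.induce (A : Set V)).Connected →
      A.card + t ≤ Fintype.card V →
      ∃ S : Finset V, A ⊆ S ∧ S.card = A.card + t ∧ (G.induce (S : Set V)).Connected := by
  intro t
  induction t with
  | zero => exact fun A hA hc _ => ⟨A, Finset.Subset.refl A, rfl, hc⟩
  | succ t ih =>
    intro A hA hc hle
    have hne : A ≠ Finset.univ := by
      intro h
      rw [h, Finset.card_univ] at hle
      omega
    obtain ⟨b, hb⟩ : ∃ b, b ∉ A := by
      by_contra h
      push_neg at h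
      exact hne (Finset.eq_univ_iff_forall.2 h)
    obtain ⟨a, ha⟩ := hA
    obtain ⟨u, w, hu, hw, hadj⟩ := walk_cross G (hG a b).some A ha hb
    have hc' : (G.induce ((insert w A : Finset V) : Set V)).Connected := by
      have : ((insert w A : Finset V) : Set V) = (A : Set V) ∪ {w} := by
        rw [Finset.coe_insert, Set.union_comm, Set.singleton_union]
      rw [this]
      exact SimpleGraph.connected_induce_union hc.preconnected (induce_singleton_connected G w).preconnected
        hu rfl hadj
    have hcard : (insert w A).card = A.card + 1 := Finset.card_insert_of_notMem hw
    obtain ⟨S, hAS, hScard, hSc⟩ := ih (insert w A) ⟨w, Finset.mem_insert_self w A⟩ hc'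
      (by omega)
    exact ⟨S, (Finset.subset_insert w A).trans hAS, by omega, hSc⟩

lemma cutCount_union_split {B C : Finset V} (hd : Disjoint B C)
    (hnc : ∀ u ∈ B, ∀ w ∈ C, ¬ G.Adj u w) :
    cutCount G (B ∪ C) (B ∪ C) = cutCount G B B + cutCount G C C := by
  rw [cutCount_eq_sum, cutCount_eq_sum, cutCount_eq_sum, Finset.sum_union hd]
  congr 1
  · refine Finset.sum_congr rfl fun x hx => ?_
    congr 1
    rw [Finset.filter_union]
    have : C.filter (fun y => G.Adj x y) = ∅ := by
      rw [Finset.filter_eq_empty_iff]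
      exact fun {y} hy => hnc x hx y hy
    rw [this, Finset.union_empty]
  · refine Finset.sum_congr rfl fun x hx => ?_
    congr 1
    rw [Finset.filter_union]
    have : B.filter (fun y => G.Adj x y) = ∅ := by
      rw [Finset.filter_eq_empty_iff]
      exact fun {y} hy hadj => hnc y hy x hx (G.adj_symm hadj)
    rw [this, Finset.empty_union]

lemma extract : ∀ (N : ℕ) (S : Finset V), S.card ≤ N → S.Nonempty →
    ∃ A : Finset V, A ⊆ S ∧ A.Nonempty ∧ (G.induce (A : Set V)).Connected ∧
      A.card * cutCount G S S ≤ S.card * cutCount G A A := by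
  intro N
  induction N with
  | zero => intro S h hne; exact absurd (Finset.card_pos.2 hne) (by omega)
  | succ N ih =>
    intro S hcard hne
    by_cases hconn : (G.induce (S : Set V)).Connected
    · exact ⟨S, Finset.Subset.refl S, hne, hconn, le_of_eq (by ring)⟩
    · -- split S
      obtain ⟨a, ha⟩ := hne
      classical
      set B := S.filter (fun w => ∃ h : w ∈ S, (G.induce (S : Set V)).Reachable ⟨a, ha⟩ ⟨w, h⟩)
        with hBdef
      have haB : a ∈ B := Finset.mem_filter.2 ⟨ha, ha, SimpleGraph.Reachable.refl _⟩
      have hBS : B ⊆ S := Finset.filter_subset _ _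
      -- there is y ∈ S not reachable
      have hy : ∃ y, y ∈ S \ B := by
        by_contra h
        push_neg at h
        apply hconn
        rw [SimpleGraph.connected_iff_exists_forall_reachable]
        refine ⟨⟨a, ha⟩, ?_⟩
        rintro ⟨w, hw⟩
        have hwS : w ∈ S := hw
        have : w ∈ B := by
          by_contra hwB
          exact h w (Finset.mem_sdiff.2 ⟨hwS, hwB⟩)
        obtain ⟨_, hr⟩ := Finset.mem_filter.1 this
        obtain ⟨h', hr⟩ := hr
        exact hr
      obtain ⟨y, hySB⟩ := hy
      set C := S \ B with hCdef
      have hBC : B ∪ C = S := Finset.union_sdiff_of_subset hBS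
      have hdisj : Disjoint B C := Finset.disjoint_sdiff
      have hCne : C.Nonempty := ⟨y, hySB⟩
      have hBne : B.Nonempty := ⟨a, haB⟩
      have hnc : ∀ u ∈ B, ∀ w ∈ C, ¬ G.Adj u w := by
        intro u hu w hw hadj
        obtain ⟨huS, hu', hr⟩ := Finset.mem_filter.1 hu
        have hwS : w ∈ S := (Finset.mem_sdiff.1 hw).1
        have hwB : w ∉ B := (Finset.mem_sdiff.1 hw).2
        apply hwB
        refine Finset.mem_filter.2 ⟨hwS, hwS, ?_⟩
        have hadj' : (G.induce (S : Set V)).Adj ⟨u, huS⟩ ⟨w, hwS⟩ := hadj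
        exact hr.trans hadj'.reachable
      have hsplit := cutCount_union_split G hdisj hnc
      rw [hBC] at hsplit
      have hcardBC : B.card + C.card = S.card := by
        rw [← hBC, Finset.card_union_of_disjoint hdisj]
      have hBlt : B.card < S.card := by
        have := Finset.card_pos.2 hCne; omega
      have hClt : C.card < S.card := by
        have := Finset.card_pos.2 hBne; omega
      by_cases hside : B.card * cutCount G S S ≤ S.card * cutCount G B B
      · obtain ⟨A, hAB, hAne, hAc, hAq⟩ := ih B (by omega) hBne
        refine ⟨A, hAB.trans hBS, hAne, hAc, ?_⟩
        have h1 : A.card * (B.card * cutCount G S S) ≤ A.card * (S.card * cutCount G B B) :=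
          Nat.mul_le_mul_left _ hside
        have h2 : S.card * (A.card * cutCount G B B) ≤ S.card * (B.card * cutCount G A A) :=
          Nat.mul_le_mul_left _ hAq
        have hBpos : 0 < B.card := Finset.card_pos.2 hBne
        nlinarith
      · push_neg at hside
        have hside' : C.card * cutCount G S S ≤ S.card * cutCount G C C := by nlinarith
        obtain ⟨A, hAC, hAne, hAc, hAq⟩ := ih C (by omega) hCne
        refine ⟨A, hAC.trans (Finset.sdiff_subset), hAne, hAc, ?_⟩
        have hCpos : 0 < C.card := Finset.card_pos.2 hCne
        nlinarith

lemma top_select (U : Finset V) (f : V → ℕ) (r : ℕ) (hr : r ≤ U.card) :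
    ∃ T : Finset V, T ⊆ U ∧ T.card = r ∧
      r * ∑ u ∈ U, f u ≤ U.card * ∑ t ∈ T, f t := by
  classical
  have hP : (U.powersetCard r).Nonempty := Finset.powersetCard_nonempty.2 hr
  obtain ⟨T, hT, hTmax⟩ := Finset.exists_max_image (U.powersetCard r) (fun T => ∑ t ∈ T, f t) hP
  obtain ⟨hTU, hTcard⟩ := Finset.mem_powersetCard.1 hT
  refine ⟨T, hTU, hTcard, ?_⟩
  -- each u outside: r * f u ≤ ∑_T f
  have hout : ∀ u ∈ U \ T, r * f u ≤ ∑ t ∈ T, f t := by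
    intro u hu
    obtain ⟨huU, huT⟩ := Finset.mem_sdiff.1 hu
    have hpt : ∀ t ∈ T, f u ≤ f t := by
      intro t ht
      have hT' : insert u (T.erase t) ∈ U.powersetCard r := by
        rw [Finset.mem_powersetCard]
        constructor
        · intro x hx
          rcases Finset.mem_insert.1 hx with rfl | hx
          · exact huU
          · exact hTU (Finset.erase_subset _ _ hx)
        · rw [Finset.card_insert_of_notMem (fun h => huT (Finset.erase_subset _ _ h)),
            Finset.card_erase_of_mem ht, hTcard]
          have : 0 < r := hTcard ▸ Finset.card_pos.2 ⟨t, ht⟩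
          omega
      have := hTmax _ hT'
      rw [Finset.sum_insert (fun h => huT (Finset.erase_subset _ _ h))] at this
      have herase : ∑ x ∈ T.erase t, f x = ∑ x ∈ T, f x - f t := by
        rw [← Finset.add_sum_erase T f ht]
        omega
      have hfle : f t ≤ ∑ x ∈ T, f x := Finset.single_le_sum (fun i _ => Nat.zero_le _) ht
      omega
    calc r * f u = ∑ _t ∈ T, f u := by rw [Finset.sum_const, hTcard]; ring
    _ ≤ ∑ t ∈ T, f t := Finset.sum_le_sum hpt
  have hsum : r * ∑ u ∈ U \ T, f u ≤ (U.card - r) * ∑ t ∈ T, f t := by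
    calc r * ∑ u ∈ U \ T, f u = ∑ u ∈ U \ T, r * f u := by rw [Finset.mul_sum]
    _ ≤ ∑ _u ∈ U \ T, ∑ t ∈ T, f t := Finset.sum_le_sum hout
    _ = (U.card - r) * ∑ t ∈ T, f t := by
        rw [Finset.sum_const, Finset.card_sdiff_of_subset hTU, hTcard]; ring
  have hUsplit : ∑ u ∈ U, f u = ∑ t ∈ T, f t + ∑ u ∈ U \ T, f u := by
    rw [← Finset.sum_union (Finset.disjoint_sdiff), Finset.union_sdiff_of_subset hTU]
  rw [hUsplit, Nat.mul_add]
  have : (U.card - r) * ∑ t ∈ T, f t + r * ∑ t ∈ T, f t = U.card * ∑ t ∈ T, f t := by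
    have : U.card - r + r = U.card := by omega
    rw [← Nat.add_mul, this]
  omega

lemma degree_split (Vh : Finset V) :
    ∑ v ∈ Vh, G.degree v =
      cutCount G Vh Vh + ∑ u ∈ Finset.univ \ Vh, (Vh.filter (fun y => G.Adj u y)).card := by
  have hdeg : ∀ v, G.degree v = (Finset.univ.filter (fun y => G.Adj v y)).card := by
    intro v
    rw [← SimpleGraph.neighborFinset_eq_filter, SimpleGraph.degree]
  have hsplit : ∀ v, (Finset.univ.filter (fun y => G.Adj v y)).card
      = (Vh.filter (fun y => G.Adj v y)).card
        + ((Finset.univ \ Vh).filter (fun y => G.Adj v y)).card := by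
    intro v
    rw [← Finset.card_union_of_disjoint
      (Finset.disjoint_filter_filter Finset.disjoint_sdiff),
      ← Finset.filter_union, Finset.union_sdiff_of_subset (Finset.subset_univ Vh)]
  have hswap : ∑ v ∈ Vh, ((Finset.univ \ Vh).filter (fun y => G.Adj v y)).card
      = ∑ u ∈ Finset.univ \ Vh, (Vh.filter (fun y => G.Adj u y)).card := by
    simp only [Finset.card_filter]
    rw [Finset.sum_comm]
    exact Finset.sum_congr rfl fun x _ => Finset.sum_congr rfl fun y _ => by
      simp [G.adj_comm]
  rw [cutCount_eq_sum]
  calc ∑ v ∈ Vh, G.degree v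
      = ∑ v ∈ Vh, ((Vh.filter (fun y => G.Adj v y)).card
        + ((Finset.univ \ Vh).filter (fun y => G.Adj v y)).card) := by
        exact Finset.sum_congr rfl fun v _ => by rw [hdeg, hsplit]
    _ = _ := by rw [Finset.sum_add_distrib, hswap]

lemma union_lower (Vh T : Finset V) (hd : Disjoint Vh T) :
    cutCount G Vh Vh + 2 * ∑ t ∈ T, (Vh.filter (fun y => G.Adj t y)).card
      ≤ cutCount G (Vh ∪ T) (Vh ∪ T) := by
  have hsplit : ∀ (v : V), ((Vh ∪ T).filter (fun y => G.Adj v y)).card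
      = (Vh.filter (fun y => G.Adj v y)).card + (T.filter (fun y => G.Adj v y)).card := by
    intro v
    rw [← Finset.card_union_of_disjoint (Finset.disjoint_filter_filter hd),
      ← Finset.filter_union]
  have hswap : ∑ v ∈ Vh, (T.filter (fun y => G.Adj v y)).card
      = ∑ t ∈ T, (Vh.filter (fun y => G.Adj t y)).card := by
    simp only [Finset.card_filter]
    rw [Finset.sum_comm]
    exact Finset.sum_congr rfl fun x _ => Finset.sum_congr rfl fun y _ => by
      simp [G.adj_comm]
  have h1 : cutCount G (Vh ∪ T) (Vh ∪ T)
      = ∑ x ∈ Vh, ((Vh ∪ T).filter (fun y => G.Adj x y)).card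
        + ∑ x ∈ T, ((Vh ∪ T).filter (fun y => G.Adj x y)).card := by
    rw [cutCount_eq_sum, Finset.sum_union hd]
  have e1 : ∑ x ∈ Vh, ((Vh ∪ T).filter (fun y => G.Adj x y)).card
      = cutCount G Vh Vh + ∑ t ∈ T, (Vh.filter (fun y => G.Adj t y)).card := by
    rw [cutCount_eq_sum, ← hswap, ← Finset.sum_add_distrib]
    exact Finset.sum_congr rfl fun v _ => hsplit v
  have e2 : ∑ t ∈ T, (Vh.filter (fun y => G.Adj t y)).card
      ≤ ∑ x ∈ T, ((Vh ∪ T).filter (fun y => G.Adj x y)).card := by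
    refine Finset.sum_le_sum fun t _ => ?_
    rw [hsplit t]
    omega
  omega

lemma cutCount_le_sq (A : Finset V) : cutCount G A A ≤ A.card * A.card := by
  calc cutCount G A A ≤ (A ×ˢ A).card := Finset.card_filter_le _ _
  _ = A.card * A.card := Finset.card_product A A

end helpers

/-- with `V_h` a set of `k/2` vertices of highest degrees and `d_h`
their average degree, `G` has a connected `k`-subgraph of density at least
`(√k/(2n))·d_h`. -/
theorem stmt10 [Fintype V] [DecidableEq V] (G : SimpleGraph V) [DecidableRel G.Adj]
    (hG : G.Connected) (k : ℕ) (hke : Even k) (hk4 : 4 ≤ k) (hkn : k ≤ Fintype.card V)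
    (Vh : Finset V) (hVh : Vh.card = k / 2)
    (hhigh : ∀ u ∉ Vh, ∀ v ∈ Vh, G.degree u ≤ G.degree v) :
    ∃ S : Finset V, S.card = k ∧ (G.induce (S : Set V)).Connected ∧
      indDensity G S ≥ (Real.sqrt k / (2 * (Fintype.card V : ℝ))) *
        ((2 / (k : ℝ)) * ∑ v ∈ Vh, (G.degree v : ℝ)) := by
  classical
  set n := Fintype.card V with hn
  have hn0 : 0 < n := by omega
  set r := k / 2 with hr
  have hk2 : 2 * r = k := by
    obtain ⟨m, hm⟩ := hke
    omega
  set dsum := ∑ v ∈ Vh, G.degree v with hdsum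
  have hdsumcast : ((dsum : ℝ)) = ∑ v ∈ Vh, (G.degree v : ℝ) := by push_cast [hdsum]; rfl
  set RHS := (Real.sqrt k / (2 * (n : ℝ))) * ((2 / (k : ℝ)) * ∑ v ∈ Vh, (G.degree v : ℝ))
    with hRHS
  have hk0' : (0:ℝ) < k := by positivity
  have hn0' : (0:ℝ) < n := by exact_mod_cast hn0
  have hsq : Real.sqrt k * Real.sqrt k = k := Real.mul_self_sqrt (by positivity)
  have hsqnn : 0 ≤ Real.sqrt k := Real.sqrt_nonneg _
  have hdens : ∀ S : Finset V, S.card = k → indDensity G S = (cutCount G S S : ℝ) / k := by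
    intro S hS
    have := two_mul_induce_edges G S
    unfold indDensity
    rw [hS]
    rw [← this]
    push_cast
    ring
  have hRHSeq : RHS = Real.sqrt k * dsum / ((n:ℝ) * k) := by
    rw [hRHS, ← hdsumcast]
    field_simp
  -- the easy construction
  have heasy : ∃ S : Finset V, S.card = k ∧ (G.induce (S : Set V)).Connected ∧
      (2 * (k:ℝ) - 2) / k ≤ indDensity G S := by
    obtain ⟨a⟩ := hG.nonempty
    obtain ⟨S, hAS, hScard, hSconn⟩ := grow_s10 G hG (k - 1) {a}
      ⟨a, Finset.mem_singleton_self a⟩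
      (by rw [Finset.coe_singleton]; exact induce_singleton_connected G a)
      (by rw [Finset.card_singleton]; omega)
    rw [Finset.card_singleton] at hScard
    have hScard' : S.card = k := by omega
    have hbound : 2 * S.card ≤ cutCount G S S + 2 := by
      have h1 := conn_card_le_edges _ hSconn
      have h2 := two_mul_induce_edges G S
      have h3 := card_coe_set (V := V) S
      omega
    refine ⟨S, hScard', hSconn, ?_⟩
    rw [hdens S hScard']
    have hnum : (2 * (k:ℝ) - 2) ≤ (cutCount G S S : ℝ) := by
      have h4 : 2 * k ≤ cutCount G S S + 2 := by omega
      have h5 : (2 * k : ℝ) ≤ (cutCount G S S : ℝ) + 2 := by exact_mod_cast h4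
      linarith
    exact div_le_div_of_nonneg_right hnum (le_of_lt hk0')
  by_cases hcase : RHS ≤ 2 * ((k:ℝ) - 1) / k
  · obtain ⟨S, h1, h2, h3⟩ := heasy
    refine ⟨S, h1, h2, ?_⟩
    calc RHS ≤ 2 * ((k:ℝ) - 1) / k := hcase
      _ = (2 * (k:ℝ) - 2) / k := by ring_nf
      _ ≤ indDensity G S := h3
  · push_neg at hcase
    -- hard case
    set U := Finset.univ \ Vh with hU
    have hUcard : U.card = n - r := by
      rw [hU, Finset.card_sdiff_of_subset (Finset.subset_univ Vh), Finset.card_univ, hVh]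
    have hrU : r ≤ U.card := by omega
    set f : V → ℕ := fun u => (Vh.filter (fun y => G.Adj u y)).card with hf
    obtain ⟨T, hTU, hTcard, hTsum⟩ := top_select U f r hrU
    have hdisj : Disjoint Vh T :=
      Finset.disjoint_of_subset_right hTU Finset.disjoint_sdiff
    set S0 := Vh ∪ T with hS0
    have hS0card : S0.card = k := by
      rw [hS0, Finset.card_union_of_disjoint hdisj, hVh, hTcard]
      omega
    have hdegsp := degree_split G Vh
    have hun := union_lower G Vh T hdisj
    -- key : k * dsum ≤ n * e0
    have hUn : U.card ≤ n := by omega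
    have hfU : (∑ u ∈ U, f u) = ∑ u ∈ Finset.univ \ Vh, (Vh.filter (fun y => G.Adj u y)).card :=
      rfl
    have hkey : k * dsum ≤ n * cutCount G S0 S0 := by
      have h1 : dsum = cutCount G Vh Vh + ∑ u ∈ U, f u := by rw [hfU, ← hdegsp]
      have h2 : cutCount G Vh Vh + 2 * ∑ t ∈ T, f t ≤ cutCount G S0 S0 := hun
      have h3 : r * ∑ u ∈ U, f u ≤ U.card * ∑ t ∈ T, f t := hTsum
      have h4 : U.card * ∑ t ∈ T, f t ≤ n * ∑ t ∈ T, f t :=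
        Nat.mul_le_mul_right _ hUn
      have h5 : n * (cutCount G Vh Vh + 2 * ∑ t ∈ T, f t) ≤ n * cutCount G S0 S0 :=
        Nat.mul_le_mul_left _ h2
      have h6 : k ≤ n := hkn
      nlinarith [Nat.zero_le (cutCount G Vh Vh), Nat.zero_le (∑ u ∈ U, f u)]
    -- extract dense connected piece
    have hS0ne : S0.Nonempty := by
      rw [← Finset.card_pos, hS0card]; omega
    obtain ⟨A, hAS0, hAne, hAconn, hAq⟩ := extract G S0.card S0 (le_refl _) hS0ne
    rw [hS0card] at hAq
    have hAcard : A.card ≤ k := hS0card ▸ Finset.card_le_card hAS0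
    obtain ⟨S, hAS, hScard, hSconn⟩ := grow_s10 G hG (k - A.card) A hAne hAconn (by omega)
    have hScard' : S.card = k := by omega
    have hmono : cutCount G A A ≤ cutCount G S S := cutCount_mono G hAS
    refine ⟨S, hScard', hSconn, ?_⟩
    rw [ge_iff_le, hdens S hScard', hRHSeq]
    -- real arithmetic
    have hApos : 0 < A.card := Finset.card_pos.2 hAne
    have haR1 : (1:ℝ) ≤ (A.card:ℝ) := by exact_mod_cast hApos
    have hF1 : (A.card:ℝ) * (cutCount G S0 S0 : ℝ) ≤ (k : ℝ) * (cutCount G A A : ℝ) := by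
      exact_mod_cast hAq
    have hF2 : (k:ℝ) * (dsum:ℝ) ≤ (n:ℝ) * (cutCount G S0 S0:ℝ) := by exact_mod_cast hkey
    have hF3 : (cutCount G A A : ℝ) ≤ (A.card:ℝ) * (A.card:ℝ) := by
      exact_mod_cast cutCount_le_sq G A
    have hF4 : (cutCount G A A : ℝ) ≤ (cutCount G S S : ℝ) := by exact_mod_cast hmono
    have hdsumnn : (0:ℝ) ≤ dsum := by positivity
    have he0nn : (0:ℝ) ≤ (cutCount G S0 S0:ℝ) := by positivity
    by_cases hA : Real.sqrt k ≤ (A.card:ℝ)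
    · rw [div_le_div_iff₀ (by positivity) hk0']
      -- √k * dsum * k ≤ cutS * (n * k)
      nlinarith [mul_le_mul_of_nonneg_left hF1 (le_of_lt hn0'),
        mul_le_mul_of_nonneg_left hF2 (by linarith : (0:ℝ) ≤ (A.card:ℝ)),
        mul_le_mul_of_nonneg_right hA (mul_nonneg (le_of_lt hk0') hdsumnn),
        mul_le_mul_of_nonneg_left hF4 (by positivity : (0:ℝ) ≤ (n:ℝ) * (k:ℝ))]
    · exfalso
      push_neg at hA
      have hsqpos : 0 < Real.sqrt k := Real.sqrt_pos.2 hk0'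
      -- aR^2 < k
      have ha2 : (A.card:ℝ) * (A.card:ℝ) < (k:ℝ) := by nlinarith
      -- e0 ≤ k * aR
      have he0le : (cutCount G S0 S0:ℝ) ≤ (k:ℝ) * (A.card:ℝ) := by nlinarith
      -- dsum < n * √k  (k*dsum ≤ n*e0 ≤ n*k*aR < n*k*√k)
      have hdlt : (dsum:ℝ) * (k:ℝ) < (n:ℝ) * Real.sqrt k * (k:ℝ) := by
        nlinarith [mul_le_mul_of_nonneg_left he0le (le_of_lt hn0'),
          mul_lt_mul_of_pos_left hA (by positivity : (0:ℝ) < (n:ℝ) * (k:ℝ))]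
      have hRHSlt : RHS < 1 := by
        rw [hRHSeq, div_lt_one (by positivity)]
        nlinarith [mul_lt_mul_of_pos_left hdlt hsqpos, hsq, hk0']
      have : 2 * ((k:ℝ) - 1) / k < 1 := lt_trans hcase hRHSlt
      rw [div_lt_one hk0'] at this
      have : (k:ℝ) < 2 := by linarith
      have : (4:ℝ) ≤ (k:ℝ) := by exact_mod_cast hk4
      linarith
end
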